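/- arXiv:2007.07209 — 3 statements merged into one kernel-verified Lean document; each statement's English description precedes it below -/
import Mathlib

section
/- Combined robustness: For all nonzero-sum mean-payoff games G, all ε, δ > 0, all vertices v, all Player 0 strategies σ₀, and all rationals c: if ASV_G^{2δ+ε}(σ₀)(v) > c, then for every perturbed game H ∈ G^{±δ}, inf over σ₁ in the set of ε-best-responses to σ₀ in H of MP₀^H(Out_v(σ₀,σ₁)) > c − δ. -/
open Filter

namespace MPG

variable {V : Type}

/-- A strategy maps histories (finite sequences of visited vertices, last = current) to a next vertex. -/
abbrev Strat (V : Type) := List V → V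

/-- A bi-weighted mean-payoff game: finite directed graph with every vertex having a successor,
a partition of vertices between the players (`owner0`), and two weight functions. -/
structure Game (V : Type) where
  E : V → V → Prop
  succ : ∀ v, ∃ v', E v v'
  owner0 : V → Bool
  w0 : V → V → ℝ
  w1 : V → V → ℝ

/-- A valid Player-0 strategy respects the edges at Player-0 vertices. -/
def Game.Valid0 (G : Game V) (σ : Strat V) : Prop :=
  ∀ (h : List V) (u : V), h.getLast? = some u → G.owner0 u = true → G.E u (σ h)

/-- A valid Player-1 strategy respects the edges at Player-1 vertices. -/
def Game.Valid1 (G : Game V) (σ : Strat V) : Prop :=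
  ∀ (h : List V) (u : V), h.getLast? = some u → G.owner0 u = false → G.E u (σ h)

/-- Finite prefixes of the unique outcome of a strategy profile from `v`. -/
def outPrefix (G : Game V) (σ0 σ1 : Strat V) (v : V) : ℕ → List V
  | 0 => [v]
  | n + 1 =>
      outPrefix G σ0 σ1 v n ++
        [if G.owner0 ((outPrefix G σ0 σ1 v n).getLastD v) then
            σ0 (outPrefix G σ0 σ1 v n)
          else σ1 (outPrefix G σ0 σ1 v n)]

/-- The unique outcome play `Out_v(σ0,σ1)`. -/
def outcome (G : Game V) (σ0 σ1 : Strat V) (v : V) (n : ℕ) : V :=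
  (outPrefix G σ0 σ1 v n).getLastD v

/-- liminf mean-payoff of a play for a weight function. -/
noncomputable def mp (w : V → V → ℝ) (π : ℕ → V) : ℝ :=
  Filter.liminf (fun k : ℕ => (∑ i ∈ Finset.range k, w (π i) (π (i + 1))) / (k : ℝ))
    Filter.atTop

/-- The ε-best-responses of Player 1 to a Player-0 strategy `σ0`. -/
def BR (G : Game V) (ε : ℝ) (σ0 : Strat V) : Set (Strat V) :=
  {σ1 | G.Valid1 σ1 ∧ ∀ (v : V) (σ1' : Strat V), G.Valid1 σ1' →
      mp G.w1 (outcome G σ0 σ1 v) > mp G.w1 (outcome G σ0 σ1' v) - ε}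

/-- `ASV^ε(σ0)(v)`: value of `σ0` against ε-best responses. -/
noncomputable def ASVe (G : Game V) (ε : ℝ) (σ0 : Strat V) (v : V) : ℝ :=
  sInf ((fun σ1 => mp G.w0 (outcome G σ0 σ1 v)) '' BR G ε σ0)

/-- `ASV^ε(v)`: the ε-adversarial Stackelberg value. -/
noncomputable def ASVeV (G : Game V) (ε : ℝ) (v : V) : ℝ :=
  sSup {x : ℝ | ∃ σ0 : Strat V, G.Valid0 σ0 ∧ x = ASVe G ε σ0 v}

/-- `ASV(σ0)(v) = sup_{ε>0} ASV^ε(σ0)(v)`. -/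
noncomputable def ASVs (G : Game V) (σ0 : Strat V) (v : V) : ℝ :=
  sSup {x : ℝ | ∃ ε : ℝ, 0 < ε ∧ x = ASVe G ε σ0 v}

/-- Zero-sum worst-case value of a Player-0 strategy. -/
noncomputable def Val (G : Game V) (σ0 : Strat V) (v : V) : ℝ :=
  sInf {x : ℝ | ∃ σ1 : Strat V, G.Valid1 σ1 ∧ x = mp G.w0 (outcome G σ0 σ1 v)}

/-- `H ∈ G^{±δ}`: same arena, every edge weight changed by strictly less than δ. -/
def Perturbed (G H : Game V) (δ : ℝ) : Prop :=
  H.E = G.E ∧ H.owner0 = G.owner0 ∧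
    ∀ u v : V, G.E u v → |H.w0 u v - G.w0 u v| < δ ∧ |H.w1 u v - G.w1 u v| < δ

/-- A finite-memory strategy: realizable by a finite-state machine reading the history. -/
def FinMem (σ : Strat V) : Prop :=
  ∃ (M : Type) (_ : Fintype M) (m0 : M) (upd : M → V → M) (o : M → V),
    ∀ h : List V, σ h = o (List.foldl upd m0 h)

/-- A vertex is `(c,d)^ε`-bad if Player 1 can enforce `MP₀ ≤ c ∧ MP₁ > d - ε` from it. -/
def Bad (G : Game V) (c d ε : ℝ) (v : V) : Prop :=
  ∃ σ1 : Strat V, G.Valid1 σ1 ∧ ∀ σ0 : Strat V, G.Valid0 σ0 →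
    mp G.w0 (outcome G σ0 σ1 v) ≤ c ∧ mp G.w1 (outcome G σ0 σ1 v) > d - ε

end MPG


namespace MPG

variable {V : Type}

lemma outPrefix_head? (G : Game V) (σ0 σ1 : Strat V) (v : V) (n : ℕ) :
    (outPrefix G σ0 σ1 v n).head? = some v := by
  induction n with
  | zero => rfl
  | succ n ih =>
      show ((outPrefix G σ0 σ1 v n) ++ _).head? = some v
      cases hcase : outPrefix G σ0 σ1 v n with
      | nil => rw [hcase] at ih; simp at ih
      | cons a t => rw [hcase] at ih; simpa using ih

lemma outPrefix_ne_nil (G : Game V) (σ0 σ1 : Strat V) (v : V) (n : ℕ) :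
    outPrefix G σ0 σ1 v n ≠ [] := by
  intro hnil
  have := outPrefix_head? G σ0 σ1 v n
  rw [hnil] at this
  simp at this

lemma outPrefix_getLast? (G : Game V) (σ0 σ1 : Strat V) (v : V) (n : ℕ) :
    (outPrefix G σ0 σ1 v n).getLast? = some (outcome G σ0 σ1 v n) := by
  obtain ⟨a, ha⟩ := Option.isSome_iff_exists.mp
    (List.getLast?_isSome.mpr (outPrefix_ne_nil G σ0 σ1 v n))
  rw [ha]
  congr 1
  show a = (outPrefix G σ0 σ1 v n).getLastD v
  rw [List.getLastD_eq_getLast?, ha]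
  rfl

lemma outcome_succ (G : Game V) (σ0 σ1 : Strat V) (v : V) (n : ℕ) :
    outcome G σ0 σ1 v (n + 1) =
      if G.owner0 (outcome G σ0 σ1 v n) then σ0 (outPrefix G σ0 σ1 v n)
      else σ1 (outPrefix G σ0 σ1 v n) := by
  show (outPrefix G σ0 σ1 v n ++ [_]).getLastD v = _
  rw [List.getLastD_concat]
  rfl

lemma outcome_edge (G : Game V) {σ0 σ1 : Strat V} (h0 : G.Valid0 σ0) (h1 : G.Valid1 σ1)
    (v : V) (n : ℕ) : G.E (outcome G σ0 σ1 v n) (outcome G σ0 σ1 v (n + 1)) := by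
  rw [outcome_succ]
  by_cases hb : G.owner0 (outcome G σ0 σ1 v n) = true
  · rw [if_pos hb]; exact h0 _ _ (outPrefix_getLast? G σ0 σ1 v n) hb
  · rw [if_neg hb]
    exact h1 _ _ (outPrefix_getLast? G σ0 σ1 v n) ((Bool.not_eq_true _).mp hb)

lemma outPrefix_congr_game {G H : Game V} (hown : H.owner0 = G.owner0)
    (σ0 σ1 : Strat V) (v : V) (n : ℕ) :
    outPrefix H σ0 σ1 v n = outPrefix G σ0 σ1 v n := by
  induction n with
  | zero => rfl
  | succ n ih =>
      show outPrefix H σ0 σ1 v n ++ _ = outPrefix G σ0 σ1 v n ++ _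
      rw [ih, hown]

lemma outcome_congr_game {G H : Game V} (hown : H.owner0 = G.owner0)
    (σ0 σ1 : Strat V) (v : V) :
    outcome H σ0 σ1 v = outcome G σ0 σ1 v := by
  funext n
  show (outPrefix H σ0 σ1 v n).getLastD v = (outPrefix G σ0 σ1 v n).getLastD v
  rw [outPrefix_congr_game hown]

lemma outPrefix_congr_strat (G : Game V) (σ0 : Strat V) {σ1 σ1' : Strat V} (v : V)
    (hagree : ∀ h : List V, h.head? = some v → σ1 h = σ1' h) (n : ℕ) :
    outPrefix G σ0 σ1 v n = outPrefix G σ0 σ1' v n := by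
  induction n with
  | zero => rfl
  | succ n ih =>
      show outPrefix G σ0 σ1 v n ++ [_] = outPrefix G σ0 σ1' v n ++ [_]
      rw [← ih, hagree _ (outPrefix_head? G σ0 σ1 v n)]

lemma outcome_congr_strat (G : Game V) (σ0 : Strat V) {σ1 σ1' : Strat V} (v : V)
    (hagree : ∀ h : List V, h.head? = some v → σ1 h = σ1' h) :
    outcome G σ0 σ1 v = outcome G σ0 σ1' v := by
  funext n
  show (outPrefix G σ0 σ1 v n).getLastD v = (outPrefix G σ0 σ1' v n).getLastD v
  rw [outPrefix_congr_strat G σ0 v hagree]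

lemma exists_bound [Fintype V] (w : V → V → ℝ) :
    ∃ B : ℝ, 0 ≤ B ∧ ∀ u u' : V, |w u u'| ≤ B := by
  obtain ⟨B, hB⟩ := (Set.finite_range (fun p : V × V => |w p.1 p.2|)).bddAbove
  exact ⟨max B 0, le_max_right _ _,
    fun u u' => le_trans (hB (Set.mem_range_self (u, u'))) (le_max_left _ _)⟩

lemma avg_abs_le {w : V → V → ℝ} {B : ℝ} (hB0 : 0 ≤ B) (hB : ∀ u u', |w u u'| ≤ B)
    (π : ℕ → V) (k : ℕ) :
    |(∑ i ∈ Finset.range k, w (π i) (π (i + 1))) / (k : ℝ)| ≤ B := by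
  rcases Nat.eq_zero_or_pos k with rfl | hk
  · simpa using hB0
  · have hk' : (0 : ℝ) < (k : ℝ) := by exact_mod_cast hk
    rw [abs_div, abs_of_pos hk', div_le_iff₀ hk']
    calc |∑ i ∈ Finset.range k, w (π i) (π (i + 1))|
        ≤ ∑ i ∈ Finset.range k, |w (π i) (π (i + 1))| := Finset.abs_sum_le_sum_abs _ _
      _ ≤ ∑ _i ∈ Finset.range k, B := Finset.sum_le_sum fun i _ => hB _ _
      _ = B * (k : ℝ) := by rw [Finset.sum_const, Finset.card_range, nsmul_eq_mul]; ring

lemma mp_abs_le [Fintype V] {w : V → V → ℝ} {B : ℝ} (hB0 : 0 ≤ B)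
    (hB : ∀ u u', |w u u'| ≤ B) (π : ℕ → V) : |mp w π| ≤ B := by
  set f : ℕ → ℝ := fun k => (∑ i ∈ Finset.range k, w (π i) (π (i + 1))) / (k : ℝ) with hf
  have habs : ∀ k, |f k| ≤ B := avg_abs_le hB0 hB π
  have hbdd_ge : Filter.IsBoundedUnder (· ≥ ·) Filter.atTop f :=
    Filter.isBoundedUnder_of ⟨-B, fun k => (abs_le.mp (habs k)).1⟩
  have hbdd_le : Filter.IsBoundedUnder (· ≤ ·) Filter.atTop f :=
    Filter.isBoundedUnder_of ⟨B, fun k => (abs_le.mp (habs k)).2⟩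
  rw [abs_le]
  constructor
  · exact Filter.le_liminf_of_le hbdd_le.isCoboundedUnder_ge
      (Filter.Eventually.of_forall fun k => (abs_le.mp (habs k)).1)
  · exact Filter.liminf_le_of_frequently_le
      ((Filter.Eventually.of_forall fun k => (abs_le.mp (habs k)).2).frequently) hbdd_ge

lemma mp_le_mp_add [Fintype V] {w w' : V → V → ℝ} (π : ℕ → V) {δ : ℝ} (hδ : 0 ≤ δ)
    (hw : ∀ i, w (π i) (π (i + 1)) ≤ w' (π i) (π (i + 1)) + δ) :
    mp w π ≤ mp w' π + δ := by
  obtain ⟨B, hB0, hB⟩ := exists_bound w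
  obtain ⟨B', hB0', hB'⟩ := exists_bound w'
  set f : ℕ → ℝ := fun k => (∑ i ∈ Finset.range k, w (π i) (π (i + 1))) / (k : ℝ) with hf
  set g : ℕ → ℝ := fun k => (∑ i ∈ Finset.range k, w' (π i) (π (i + 1))) / (k : ℝ) with hg
  have hfg : ∀ k, f k ≤ g k + δ := by
    intro k
    rcases Nat.eq_zero_or_pos k with rfl | hk
    · simpa [hf, hg] using hδ
    · have hk' : (0 : ℝ) < (k : ℝ) := by exact_mod_cast hk
      have hnum : (∑ i ∈ Finset.range k, w (π i) (π (i + 1)))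
          ≤ (∑ i ∈ Finset.range k, w' (π i) (π (i + 1))) + (k : ℝ) * δ := by
        calc (∑ i ∈ Finset.range k, w (π i) (π (i + 1)))
            ≤ ∑ i ∈ Finset.range k, (w' (π i) (π (i + 1)) + δ) :=
              Finset.sum_le_sum fun i _ => hw i
          _ = (∑ i ∈ Finset.range k, w' (π i) (π (i + 1))) + (k : ℝ) * δ := by
              rw [Finset.sum_add_distrib, Finset.sum_const, Finset.card_range, nsmul_eq_mul]
      have h1 : f k ≤ ((∑ i ∈ Finset.range k, w' (π i) (π (i + 1))) + (k : ℝ) * δ) / (k : ℝ) := by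
        show (∑ i ∈ Finset.range k, w (π i) (π (i + 1))) / (k : ℝ) ≤ _
        gcongr
      have h2 : ((∑ i ∈ Finset.range k, w' (π i) (π (i + 1))) + (k : ℝ) * δ) / (k : ℝ)
          = g k + δ := by
        show _ = (∑ i ∈ Finset.range k, w' (π i) (π (i + 1))) / (k : ℝ) + δ
        field_simp
      rw [← h2]; exact h1
  have habs_f : ∀ k, |f k| ≤ B := avg_abs_le hB0 hB π
  have habs_g : ∀ k, |g k| ≤ B' := avg_abs_le hB0' hB' π
  have hbdd_f_ge : Filter.IsBoundedUnder (· ≥ ·) Filter.atTop f :=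
    Filter.isBoundedUnder_of ⟨-B, fun k => (abs_le.mp (habs_f k)).1⟩
  have hbdd_g_ge : Filter.IsBoundedUnder (· ≥ ·) Filter.atTop g :=
    Filter.isBoundedUnder_of ⟨-B', fun k => (abs_le.mp (habs_g k)).1⟩
  have hbdd_g_le : Filter.IsBoundedUnder (· ≤ ·) Filter.atTop g :=
    Filter.isBoundedUnder_of ⟨B', fun k => (abs_le.mp (habs_g k)).2⟩
  have hbdd_gδ_le : Filter.IsBoundedUnder (· ≤ ·) Filter.atTop (fun k => g k + δ) :=
    Filter.isBoundedUnder_of ⟨B' + δ, fun k => add_le_add_left (abs_le.mp (habs_g k)).2 δ⟩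
  have h1 : Filter.liminf f Filter.atTop ≤ Filter.liminf (fun k => g k + δ) Filter.atTop :=
    Filter.liminf_le_liminf (Filter.Eventually.of_forall hfg) hbdd_f_ge
      hbdd_gδ_le.isCoboundedUnder_ge
  have h2 : Filter.liminf (fun k => g k + δ) Filter.atTop = Filter.liminf g Filter.atTop + δ :=
    liminf_add_const Filter.atTop g δ hbdd_g_le.isCoboundedUnder_ge hbdd_g_ge
  show Filter.liminf f Filter.atTop ≤ Filter.liminf g Filter.atTop + δ
  rw [← h2]; exact h1

lemma exists_valid1 [Nonempty V] (H : Game V) : ∃ σ : Strat V, H.Valid1 σ := by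
  classical
  refine ⟨fun h => Classical.choose (H.succ (h.getLastD (Classical.arbitrary V))), ?_⟩
  intro h u hu _
  have hgl : h.getLastD (Classical.arbitrary V) = u := by
    rw [List.getLastD_eq_getLast?, hu]; rfl
  show H.E u (Classical.choose (H.succ (h.getLastD (Classical.arbitrary V))))
  rw [hgl] at *
  exact Classical.choose_spec (H.succ u)

lemma BR_nonempty [Fintype V] [Nonempty V] (H : Game V) {ε : ℝ} (hε : 0 < ε) (σ0 : Strat V) :
    (BR H ε σ0).Nonempty := by
  classical
  obtain ⟨σb, hσb⟩ := exists_valid1 H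
  obtain ⟨B, hB0, hB⟩ := exists_bound H.w1
  set A : V → Set ℝ := fun u => (fun σ1 => mp H.w1 (outcome H σ0 σ1 u)) '' {σ1 | H.Valid1 σ1}
    with hA
  have hAne : ∀ u, (A u).Nonempty := fun u => ⟨_, σb, hσb, rfl⟩
  have hAbdd : ∀ u, BddAbove (A u) := by
    intro u
    refine ⟨B, ?_⟩
    rintro x ⟨σ1, -, rfl⟩
    exact (abs_le.mp (mp_abs_le hB0 hB _)).2
  have hch : ∀ u : V, ∃ σ1 : Strat V, H.Valid1 σ1 ∧
      sSup (A u) - ε < mp H.w1 (outcome H σ0 σ1 u) := by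
    intro u
    obtain ⟨x, ⟨σ1, hσ1, rfl⟩, hx⟩ :=
      exists_lt_of_lt_csSup (hAne u) (by linarith : sSup (A u) - ε < sSup (A u))
    exact ⟨σ1, hσ1, hx⟩
  choose σc hσc hmp using hch
  refine ⟨fun h => match h with | [] => σb [] | x :: t => σc x (x :: t), ?_, ?_⟩
  · intro h u hu hown
    cases h with
    | nil => simp at hu
    | cons x t => exact hσc x _ u hu hown
  · intro u σ1' hσ1'
    have hagree : ∀ h : List V, h.head? = some u →
        (fun h => match h with | [] => σb [] | x :: t => σc x (x :: t) : Strat V) h = σc u h := by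
      intro h hh
      cases h with
      | nil => simp at hh
      | cons x t => simp at hh; subst hh; rfl
    rw [outcome_congr_strat H σ0 u hagree]
    have h1 : sSup (A u) - ε < mp H.w1 (outcome H σ0 (σc u) u) := hmp u
    have h2 : mp H.w1 (outcome H σ0 σ1' u) ≤ sSup (A u) :=
      le_csSup (hAbdd u) ⟨σ1', hσ1', rfl⟩
    linarith

end MPG

/-- combined robustness of `ASV^ε`. -/
theorem stmt6 {V : Type} [Fintype V] (G : MPG.Game V) (ε δ : ℝ) (hε : 0 < ε) (hδ : 0 < δ)
    (v : V) (σ0 : MPG.Strat V) (hσ0 : G.Valid0 σ0) (c : ℚ)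
    (h : MPG.ASVe G (2 * δ + ε) σ0 v > (c : ℝ)) :
    ∀ H : MPG.Game V, MPG.Perturbed G H δ →
      MPG.ASVe H ε σ0 v > (c : ℝ) - δ := by
  classical
  intro H hP
  obtain ⟨hE, hown, hw⟩ := hP
  have hNe : Nonempty V := ⟨v⟩
  -- validity transfer
  have hvalid1 : ∀ σ : MPG.Strat V, H.Valid1 σ ↔ G.Valid1 σ := by
    intro σ; unfold MPG.Game.Valid1; rw [hE, hown]
  -- outcome transfer
  have hout : ∀ (σ1 : MPG.Strat V) (u : V),
      MPG.outcome H σ0 σ1 u = MPG.outcome G σ0 σ1 u :=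
    fun σ1 u => MPG.outcome_congr_game hown σ0 σ1 u
  -- mp perturbation bounds along valid plays
  have key : ∀ (wG wH : V → V → ℝ), (∀ u u' : V, G.E u u' → |wH u u' - wG u u'| < δ) →
      ∀ (σ1 : MPG.Strat V), G.Valid1 σ1 → ∀ u : V,
        MPG.mp wG (MPG.outcome G σ0 σ1 u) ≤ MPG.mp wH (MPG.outcome G σ0 σ1 u) + δ ∧
        MPG.mp wH (MPG.outcome G σ0 σ1 u) ≤ MPG.mp wG (MPG.outcome G σ0 σ1 u) + δ := by
    intro wG wH hwd σ1 hσ1 u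
    have hedge : ∀ i : ℕ, G.E (MPG.outcome G σ0 σ1 u i) (MPG.outcome G σ0 σ1 u (i + 1)) :=
      fun i => MPG.outcome_edge G hσ0 hσ1 u i
    constructor
    · refine MPG.mp_le_mp_add _ hδ.le fun i => ?_
      have := abs_lt.mp (hwd _ _ (hedge i))
      linarith [this.1]
    · refine MPG.mp_le_mp_add _ hδ.le fun i => ?_
      have := abs_lt.mp (hwd _ _ (hedge i))
      linarith [this.2]
  -- BR inclusion
  have hsub : MPG.BR H ε σ0 ⊆ MPG.BR G (2 * δ + ε) σ0 := by
    rintro σ1 ⟨hv1, hopt⟩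
    have hσ1G : G.Valid1 σ1 := (hvalid1 σ1).mp hv1
    refine ⟨hσ1G, ?_⟩
    intro u σ1' hσ1'G
    have hσ1'H : H.Valid1 σ1' := (hvalid1 σ1').mpr hσ1'G
    have hoptu := hopt u σ1' hσ1'H
    rw [hout σ1 u, hout σ1' u] at hoptu
    have k1 := (key G.w1 H.w1 (fun a b hab => (hw a b hab).2) σ1 hσ1G u).2
    have k2 := (key G.w1 H.w1 (fun a b hab => (hw a b hab).2) σ1' hσ1'G u).1
    linarith
  -- sets
  set SG := (fun σ1 => MPG.mp G.w0 (MPG.outcome G σ0 σ1 v)) '' MPG.BR G (2 * δ + ε) σ0 with hSG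
  set SH := (fun σ1 => MPG.mp H.w0 (MPG.outcome H σ0 σ1 v)) '' MPG.BR H ε σ0 with hSH
  obtain ⟨B, hB0, hB⟩ := MPG.exists_bound G.w0
  have hSGbdd : BddBelow SG := by
    refine ⟨-B, ?_⟩
    rintro x ⟨σ1, -, rfl⟩
    exact (abs_le.mp (MPG.mp_abs_le hB0 hB _)).1
  have hHne : (MPG.BR H ε σ0).Nonempty := MPG.BR_nonempty H hε σ0
  have hSHne : SH.Nonempty := hHne.image _
  have hmain : ∀ x ∈ SH, sInf SG - δ ≤ x := by
    rintro x ⟨σ1, hσ1, rfl⟩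
    have hσ1G : σ1 ∈ MPG.BR G (2 * δ + ε) σ0 := hsub hσ1
    have hmem : MPG.mp G.w0 (MPG.outcome G σ0 σ1 v) ∈ SG := ⟨σ1, hσ1G, rfl⟩
    have hle : sInf SG ≤ MPG.mp G.w0 (MPG.outcome G σ0 σ1 v) := csInf_le hSGbdd hmem
    have k := (key G.w0 H.w0 (fun a b hab => (hw a b hab).1) σ1 hσ1G.1 v).1
    simp only [hout σ1 v]
    linarith
  have : sInf SG - δ ≤ sInf SH := le_csInf hSHne hmain
  have hG : sInf SG > (c : ℝ) := h
  calc (c : ℝ) - δ < sInf SG - δ := by linarith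
    _ ≤ sInf SH := this
    _ = MPG.ASVe H ε σ0 v := rfl
end

section
/- Pointwise-minimum convex hull: Let S be a finite set of vectors in ℚ^d. Define f_min(X) for a finite nonempty X ⊆ ℚ^d as the coordinatewise minimum of X, and F_min(T) = { f_min(P) : P a finite nonempty subset of T }. Then for the convex hull CH(S) of S, the set F_min(CH(S)) equals CH(F_min(S)) when d = 2. -/
open Filter

/-- Convex hull (by convex combinations) of a set of rational planar vectors. -/
def CH2 (S : Set (Fin 2 → ℚ)) : Set (Fin 2 → ℚ) :=
  {y | ∃ (t : Finset (Fin 2 → ℚ)) (a : (Fin 2 → ℚ) → ℚ),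
    ↑t ⊆ S ∧ (∀ x ∈ t, 0 ≤ a x) ∧ ∑ x ∈ t, a x = 1 ∧ y = ∑ x ∈ t, a x • x}

/-- Coordinatewise minimum of a finite nonempty set of planar vectors. -/
noncomputable def fmin2 (P : Finset (Fin 2 → ℚ)) (h : P.Nonempty) : Fin 2 → ℚ :=
  fun i => P.inf' h (fun x => x i)

/-- `F_min(T)`: all coordinatewise minima of finite nonempty subsets of `T`. -/
def Fmin2 (T : Set (Fin 2 → ℚ)) : Set (Fin 2 → ℚ) :=
  {y | ∃ (P : Finset (Fin 2 → ℚ)) (h : P.Nonempty), ↑P ⊆ T ∧ y = fmin2 P h}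

lemma subset_CH2 (T : Set (Fin 2 → ℚ)) : T ⊆ CH2 T := fun x hx =>
  ⟨{x}, fun _ => 1, by simpa, by simp, by simp, by simp⟩

lemma convex_CH2 (T : Set (Fin 2 → ℚ)) : Convex ℚ (CH2 T) := by
  rintro y1 ⟨t1, a1, hs1, hn1, hσ1, rfl⟩ y2 ⟨t2, a2, hs2, hn2, hσ2, rfl⟩ c d hc hd hcd
  refine ⟨t1 ∪ t2,
    fun x => c * (if x ∈ t1 then a1 x else 0) + d * (if x ∈ t2 then a2 x else 0),
    ?_, ?_, ?_, ?_⟩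
  · intro x hx
    rcases Finset.mem_union.mp (by exact_mod_cast hx) with h | h
    · exact hs1 h
    · exact hs2 h
  · intro x hx
    dsimp only
    have h1 : (0:ℚ) ≤ (if x ∈ t1 then a1 x else 0) := by
      split
      · exact hn1 _ ‹_›
      · exact le_refl 0
    have h2 : (0:ℚ) ≤ (if x ∈ t2 then a2 x else 0) := by
      split
      · exact hn2 _ ‹_›
      · exact le_refl 0
    exact add_nonneg (mul_nonneg hc h1) (mul_nonneg hd h2)
  · dsimp only
    simp only [Finset.sum_add_distrib, ← Finset.mul_sum, Finset.sum_ite_mem,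
      Finset.union_inter_cancel_left, Finset.union_inter_cancel_right, hσ1, hσ2]
    linarith
  · dsimp only
    simp only [add_smul, mul_smul, ite_smul, zero_smul, Finset.sum_add_distrib,
      ← Finset.smul_sum, Finset.sum_ite_mem,
      Finset.union_inter_cancel_left, Finset.union_inter_cancel_right]

lemma combo_mem_CH2 {ι : Type} (T : Set (Fin 2 → ℚ)) (t : Finset ι) (w : ι → ℚ)
    (z : ι → Fin 2 → ℚ) (h0 : ∀ i ∈ t, 0 ≤ w i) (h1 : ∑ i ∈ t, w i = 1)
    (hz : ∀ i ∈ t, z i ∈ CH2 T) : (∑ i ∈ t, w i • z i) ∈ CH2 T :=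
  (convex_CH2 T).sum_mem h0 h1 hz

lemma CH2_mono {T T' : Set (Fin 2 → ℚ)} (h : T ⊆ T') : CH2 T ⊆ CH2 T' := by
  rintro y ⟨t, a, hts, hn, hs, rfl⟩
  exact ⟨t, a, fun x hx => h (hts hx), hn, hs, rfl⟩

lemma subset_Fmin2 (T : Set (Fin 2 → ℚ)) : T ⊆ Fmin2 T := fun x hx =>
  ⟨{x}, Finset.singleton_nonempty x, by simpa, by funext i; simp [fmin2]⟩

lemma tri_mem {u v w m : Fin 2 → ℚ} {T : Set (Fin 2 → ℚ)}
    (h0 : m 0 = u 0) (h1 : m 1 = v 1)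
    (hA : u 0 < v 0) (hC : v 1 < u 1) (hB : w 0 ≤ u 0) (hD : w 1 ≤ v 1)
    (hu : u ∈ CH2 T) (hv : v ∈ CH2 T) (hw : w ∈ CH2 T) : m ∈ CH2 T := by
  have hA' : (0:ℚ) < v 0 - u 0 := by linarith
  have hC' : (0:ℚ) < u 1 - v 1 := by linarith
  have hB' : (0:ℚ) ≤ u 0 - w 0 := by linarith
  have hD' : (0:ℚ) ≤ v 1 - w 1 := by linarith
  have hden : (0:ℚ) < (v 0 - u 0) * (u 1 - v 1) + (u 0 - w 0) * (u 1 - v 1)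
      + (v 0 - u 0) * (v 1 - w 1) := by
    nlinarith [mul_pos hA' hC', mul_nonneg hB' hC'.le, mul_nonneg hA'.le hD']
  set den : ℚ := (v 0 - u 0) * (u 1 - v 1) + (u 0 - w 0) * (u 1 - v 1)
      + (v 0 - u 0) * (v 1 - w 1) with hdendef
  set α : ℚ := (v 0 - u 0) * (v 1 - w 1) / den with hα
  set β : ℚ := (u 0 - w 0) * (u 1 - v 1) / den with hβ
  set γ : ℚ := (v 0 - u 0) * (u 1 - v 1) / den with hγ
  have hne : den ≠ 0 := ne_of_gt hden
  have hsum : α + β + γ = 1 := by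
    rw [hα, hβ, hγ]; field_simp; rw [hdendef]; ring
  have hmem := combo_mem_CH2 T (Finset.univ : Finset (Fin 3)) ![α, β, γ] ![u, v, w]
    (by
      intro i _
      fin_cases i <;> simp [hα, hβ, hγ] <;>
        positivity)
    (by simp [Fin.sum_univ_three]; linarith)
    (by intro i _; fin_cases i <;> simpa)
  rw [Fin.sum_univ_three] at hmem
  simp only [Matrix.cons_val_zero, Matrix.cons_val_one, Matrix.head_cons,
    Matrix.cons_val_two, Matrix.tail_cons] at hmem
  have hkey : m = α • u + β • v + γ • w := by
    funext i
    fin_cases i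
    · show m 0 = α * u 0 + β * v 0 + γ * w 0
      rw [h0, hα, hβ, hγ]; field_simp; rw [hdendef]; ring
    · show m 1 = α * u 1 + β * v 1 + γ * w 1
      rw [h1, hα, hβ, hγ]; field_simp; rw [hdendef]; ring
  rwa [hkey]

lemma fmin2_pair (x z : Fin 2 → ℚ) (i : Fin 2) :
    fmin2 {x, z} (Finset.insert_nonempty _ _) i = min (x i) (z i) := by
  simp [fmin2, Finset.inf'_insert]

/-- in dimension 2, `F_min(CH(S)) = CH(F_min(S))` for finite `S`. -/
theorem stmt11 (S : Finset (Fin 2 → ℚ)) :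
    Fmin2 (CH2 ↑S) = CH2 (Fmin2 ↑S) := by
  ext y
  constructor
  · rintro ⟨P, hPne, hPsub, rfl⟩
    obtain ⟨u, hu, hu0⟩ := Finset.exists_mem_eq_inf' hPne (fun x => x 0)
    obtain ⟨v, hv, hv1⟩ := Finset.exists_mem_eq_inf' hPne (fun x => x 1)
    have hm0 : fmin2 P hPne 0 = u 0 := hu0
    have hm1 : fmin2 P hPne 1 = v 1 := hv1
    have hm0v : fmin2 P hPne 0 ≤ v 0 := Finset.inf'_le _ hv
    have hm1u : fmin2 P hPne 1 ≤ u 1 := Finset.inf'_le _ hu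
    have huC : u ∈ CH2 (Fmin2 ↑S) := CH2_mono (subset_Fmin2 _) (hPsub hu)
    have hvC : v ∈ CH2 (Fmin2 ↑S) := CH2_mono (subset_Fmin2 _) (hPsub hv)
    by_cases h01 : u 0 = v 0
    · have heq : fmin2 P hPne = v := by
        funext i; fin_cases i
        · show fmin2 P hPne 0 = v 0; rw [hm0, h01]
        · exact hm1
      rw [heq]; exact hvC
    by_cases h11 : u 1 = v 1
    · have heq : fmin2 P hPne = u := by
        funext i; fin_cases i
        · exact hm0
        · show fmin2 P hPne 1 = u 1; rw [hm1, h11]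
      rw [heq]; exact huC
    have hA : u 0 < v 0 := lt_of_le_of_ne (hm0 ▸ hm0v) h01
    have hC : v 1 < u 1 := lt_of_le_of_ne (hm1 ▸ hm1u) fun h => h11 h.symm
    obtain ⟨tu, au, htu, hau, hsu, hud⟩ := hPsub hu
    obtain ⟨tv, bv, htv, hbv, hsv, hvd⟩ := hPsub hv
    set w : Fin 2 → ℚ :=
      ∑ p ∈ tu ×ˢ tv, (au p.1 * bv p.2) • fmin2 {p.1, p.2} (Finset.insert_nonempty _ _)
      with hwdef
    have hwC : w ∈ CH2 (Fmin2 ↑S) := by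
      apply combo_mem_CH2
      · intro p hp
        obtain ⟨h1, h2⟩ := Finset.mem_product.mp hp
        exact mul_nonneg (hau _ h1) (hbv _ h2)
      · rw [Finset.sum_product]
        simp only [← Finset.mul_sum, hsv, mul_one]
        exact hsu
      · intro p hp
        obtain ⟨h1, h2⟩ := Finset.mem_product.mp hp
        refine subset_CH2 _ ⟨{p.1, p.2}, Finset.insert_nonempty _ _, ?_, rfl⟩
        intro z hz
        rcases Finset.mem_insert.mp (by exact_mod_cast hz) with h | h
        · rw [h]; exact htu h1
        · rw [Finset.mem_singleton.mp h]; exact htv h2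
    have hwcoord : ∀ i : Fin 2,
        w i = ∑ p ∈ tu ×ˢ tv, (au p.1 * bv p.2) * min (p.1 i) (p.2 i) := by
      intro i
      rw [hwdef]
      simp [Finset.sum_apply, fmin2_pair]
    have hucoord : ∀ i : Fin 2, u i = ∑ x ∈ tu, au x * x i := by
      intro i; rw [hud]; simp [Finset.sum_apply]
    have hvcoord : ∀ i : Fin 2, v i = ∑ x ∈ tv, bv x * x i := by
      intro i; rw [hvd]; simp [Finset.sum_apply]
    have hw0 : w 0 ≤ u 0 := by
      rw [hwcoord 0, hucoord 0]
      calc ∑ p ∈ tu ×ˢ tv, (au p.1 * bv p.2) * min (p.1 0) (p.2 0)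
          ≤ ∑ p ∈ tu ×ˢ tv, (au p.1 * bv p.2) * (p.1 0) := by
            apply Finset.sum_le_sum
            intro p hp
            obtain ⟨h1, h2⟩ := Finset.mem_product.mp hp
            exact mul_le_mul_of_nonneg_left (min_le_left _ _)
              (mul_nonneg (hau _ h1) (hbv _ h2))
        _ = ∑ x ∈ tu, au x * x 0 := by
            rw [Finset.sum_product]
            apply Finset.sum_congr rfl
            intro x _
            have : ∀ z, (au x * bv z) * x 0 = (au x * x 0) * bv z := fun z => by ring
            simp only [this, ← Finset.mul_sum, hsv, mul_one]
    have hw1 : w 1 ≤ v 1 := by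
      rw [hwcoord 1, hvcoord 1]
      calc ∑ p ∈ tu ×ˢ tv, (au p.1 * bv p.2) * min (p.1 1) (p.2 1)
          ≤ ∑ p ∈ tu ×ˢ tv, (au p.1 * bv p.2) * (p.2 1) := by
            apply Finset.sum_le_sum
            intro p hp
            obtain ⟨h1, h2⟩ := Finset.mem_product.mp hp
            exact mul_le_mul_of_nonneg_left (min_le_right _ _)
              (mul_nonneg (hau _ h1) (hbv _ h2))
        _ = ∑ x ∈ tv, bv x * x 1 := by
            rw [Finset.sum_product_right]
            apply Finset.sum_congr rfl
            intro z _
            have : ∀ x, (au x * bv z) * z 1 = (bv z * z 1) * au x := fun x => by ring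
            simp only [this, ← Finset.mul_sum, hsu, mul_one]
    exact tri_mem hm0 hm1 hA hC hw0 hw1 huC hvC hwC
  · rintro ⟨t, a, hts, han, hsum, rfl⟩
    have hch : ∀ x ∈ t, ∃ P : Finset (Fin 2 → ℚ), ∃ hP : P.Nonempty,
        ↑P ⊆ (↑S : Set (Fin 2 → ℚ)) ∧ x = fmin2 P hP := fun x hx => hts hx
    choose P hP hPS hPx using hch
    have hc : ∀ (i : Fin 2) (x : Fin 2 → ℚ) (hx : x ∈ t),
        ∃ z ∈ P x hx, (P x hx).inf' (hP x hx) (fun v => v i) = z i :=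
      fun i x hx => Finset.exists_mem_eq_inf' (hP x hx) _
    choose c hcmem hceq using hc
    set q : Fin 2 → (Fin 2 → ℚ) := fun i => ∑ x ∈ t.attach, a x.1 • c i x.1 x.2 with hq
    have hqS : ∀ i, q i ∈ CH2 (↑S : Set (Fin 2 → ℚ)) := by
      intro i
      apply combo_mem_CH2
      · intro x _; exact han _ x.2
      · exact (Finset.sum_attach t a).trans hsum
      · intro x _; exact subset_CH2 _ (hPS _ x.2 (hcmem i x.1 x.2))
    have hval : ∀ j i : Fin 2, q j i = ∑ x ∈ t.attach, a x.1 * (c j x.1 x.2) i := by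
      intro j i; rw [hq]; simp [Finset.sum_apply]
    have hxi : ∀ (x) (hx : x ∈ t) (i : Fin 2),
        x i = (P x hx).inf' (hP x hx) (fun v => v i) := by
      intro x hx i
      conv_lhs => rw [hPx x hx]
      rfl
    have hyi : ∀ i : Fin 2, (∑ x ∈ t, a x • x) i = ∑ x ∈ t.attach, a x.1 * x.1 i := by
      intro i
      rw [← Finset.sum_attach t (fun x => a x • x)]
      simp [Finset.sum_apply]
    have hqval : ∀ i : Fin 2, q i i = (∑ x ∈ t, a x • x) i := by
      intro i
      rw [hval, hyi]
      apply Finset.sum_congr rfl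
      intro x _
      congr 1
      rw [hxi x.1 x.2 i, hceq i x.1 x.2]
    have hqge : ∀ i j : Fin 2, (∑ x ∈ t, a x • x) i ≤ q j i := by
      intro i j
      rw [hyi, hval]
      apply Finset.sum_le_sum
      intro x _
      refine mul_le_mul_of_nonneg_left ?_ (han _ x.2)
      rw [hxi x.1 x.2 i]
      exact Finset.inf'_le _ (hcmem j x.1 x.2)
    refine ⟨{q 0, q 1}, Finset.insert_nonempty _ _, ?_, ?_⟩
    · intro z hz
      rcases Finset.mem_insert.mp (by exact_mod_cast hz) with h | h
      · rw [h]; exact hqS 0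
      · rw [Finset.mem_singleton.mp h]; exact hqS 1
    · funext i
      rw [fmin2_pair]
      fin_cases i
      · show (∑ x ∈ t, a x • x) 0 = min (q 0 0) (q 1 0)
        rw [min_eq_left (by rw [hqval 0]; exact hqge 0 1)]
        exact (hqval 0).symm
      · show (∑ x ∈ t, a x • x) 1 = min (q 0 1) (q 1 1)
        rw [min_eq_right (by rw [hqval 1]; exact hqge 1 0)]
        exact (hqval 1).symm
end

section
/- Reduction of zero-sum games to the ASV threshold: Given a zero-sum mean-payoff game G₀ with weight function w, form a bi-weighted game G with w₀ = w and w₁ ≡ 0 on every edge. Then for every vertex v, every rational c, and every ε > 0: Player 0 has a strategy in G₀ guaranteeing mean-payoff strictly greater than c against all Player 1 strategies if and only if ASV^ε(v) > c in G. -/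
open Filter

namespace ZSAux
open MPG Filter List

variable {V : Type}

/-- edge-sum along a list of vertices -/
noncomputable def es (w : V → V → ℝ) : List V → ℝ
  | [] => 0
  | [_] => 0
  | x :: y :: r => w x y + es w (y :: r)

@[simp] lemma es_nil (w : V → V → ℝ) : es w [] = 0 := rfl
@[simp] lemma es_single (w : V → V → ℝ) (x : V) : es w [x] = 0 := rfl
lemma es_cons_cons (w : V → V → ℝ) (x y : V) (r : List V) :
    es w (x :: y :: r) = w x y + es w (y :: r) := rfl

lemma es_concat (w : V → V → ℝ) :
    ∀ (l : List V) (u y : V), l.getLast? = some u → es w (l ++ [y]) = es w l + w u y := by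
  intro l
  induction l with
  | nil => intro u y h; simp at h
  | cons x r ih =>
    intro u y h
    cases r with
    | nil =>
      simp at h; subst h; simp [es_cons_cons]
    | cons b r' =>
      have h' : (b :: r').getLast? = some u := by
        rwa [List.getLast?_cons_cons] at h
      have := ih u y h'
      simp only [List.cons_append, es_cons_cons] at *
      rw [this]; ring

lemma es_split (w : V → V → ℝ) :
    ∀ (l₁ : List V) (a : V) (l₂ : List V),
      es w (l₁ ++ a :: l₂) = es w (l₁ ++ [a]) + es w (a :: l₂) := by
  intro l₁
  induction l₁ with
  | nil => intro a l₂; simp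
  | cons x r ih =>
    intro a l₂
    cases r with
    | nil => cases l₂ <;> simp [es_cons_cons]
    | cons b r' =>
      simp only [List.cons_append, es_cons_cons]
      rw [show b :: (r' ++ a :: l₂) = (b :: r') ++ a :: l₂ from rfl, ih,
        show b :: (r' ++ [a]) = (b :: r') ++ [a] from rfl]
      ring

lemma es_bound {w : V → V → ℝ} {W : ℝ} (hW0 : 0 ≤ W) (hW : ∀ u y, |w u y| ≤ W) :
    ∀ l : List V, |es w l| ≤ W * l.length := by
  intro l
  induction l with
  | nil => simp
  | cons x r ih =>
    cases r with
    | nil => simpa using hW0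
    | cons b r' =>
      rw [es_cons_cons]
      calc |w x b + es w (b :: r')| ≤ |w x b| + |es w (b :: r')| := abs_add_le _ _
        _ ≤ W + W * (b :: r').length := add_le_add (hW _ _) ih
        _ ≤ W * (x :: b :: r').length := by
            simp only [List.length_cons]; push_cast; nlinarith


section Stack
variable [DecidableEq V]

def step (p : List V) (y : V) : List V :=
  if y ∈ p then p.takeWhile (fun z => !(z == y)) ++ [y] else p ++ [y]

def stk (h : List V) : List V := h.foldl step []

@[simp] lemma stk_concat (h : List V) (y : V) : stk (h ++ [y]) = step (stk h) y := by
  simp [stk]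

@[simp] lemma getLast?_step (p : List V) (y : V) : (step p y).getLast? = some y := by
  unfold step; split <;> simp

lemma dropWhile_mem {y : V} : ∀ {p : List V}, y ∈ p →
    ∃ r, p.dropWhile (fun z => !(z == y)) = y :: r := by
  intro p hp
  induction p with
  | nil => simp at hp
  | cons a p' ih =>
    by_cases h : a = y
    · subst h
      exact ⟨p', by simp [List.dropWhile]⟩
    · have hy : y ∈ p' := by
        rcases List.mem_cons.1 hp with h' | h'
        · exact absurd h'.symm h
        · exact h'
      obtain ⟨r, hr⟩ := ih hy
      have hb : (a == y) = false := by simp [h]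
      exact ⟨r, by simp [List.dropWhile, hb, hr]⟩

omit [DecidableEq V] in
lemma prefix_concat {q l : List V} {a : V} (h : q <+: l ++ [a]) :
    q <+: l ∨ q = l ++ [a] := by
  rcases h with ⟨t, ht⟩
  cases t using List.reverseRecOn with
  | nil => right; simpa using ht
  | append_singleton t' b _ =>
    left
    have : q ++ (t' ++ [b]) = l ++ [a] := ht
    rw [← List.append_assoc] at this
    have h2 := List.append_inj' this rfl
    exact ⟨t', h2.1⟩

omit [DecidableEq V] in
lemma prefix_singleton {q : List V} {a : V} (h : q <+: [a]) : q = [] ∨ q = [a] := by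
  rcases prefix_concat (l := []) (by simpa using h) with h' | h'
  · left; exact List.prefix_nil.1 h'
  · right; simpa using h'

/-- closed cycle weight when moving from the end of `p` back to `y ∈ p`,
    where the last edge weight `w u y` (u = last of p) is added via the `++ [y]`. -/
noncomputable def cyc (w : V → V → ℝ) (p : List V) (y : V) : ℝ :=
  es w ((p.dropWhile fun z => !(z == y)) ++ [y])

noncomputable def clen (p : List V) (y : V) : ℝ :=
  ((p.dropWhile fun z => !(z == y)).length : ℝ)

end Stack

section Win

variable (E : V → V → Prop) (own : V → Bool) (w : V → V → ℝ) (c : ℝ) [DecidableEq V]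

/-- P0 wins the first-cycle game from simple path `p`. -/
inductive Win0 : List V → Prop where
  | zero (p : List V) (u : V) (hu : p.getLast? = some u) (ho : own u = true)
      (y : V) (hE : E u y)
      (hin : y ∈ p → c * clen p y < cyc w p y)
      (hout : y ∉ p → Win0 (p ++ [y])) : Win0 p
  | one (p : List V) (u : V) (hu : p.getLast? = some u) (ho : own u = false)
      (hin : ∀ y : V, E u y → y ∈ p → c * clen p y < cyc w p y)
      (hout : ∀ y : V, E u y → y ∉ p → Win0 (p ++ [y])) : Win0 p

/-- P1 wins the first-cycle game from simple path `p`. -/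
inductive Win1 : List V → Prop where
  | one (p : List V) (u : V) (hu : p.getLast? = some u) (ho : own u = false)
      (y : V) (hE : E u y)
      (hin : y ∈ p → cyc w p y ≤ c * clen p y)
      (hout : y ∉ p → Win1 (p ++ [y])) : Win1 p
  | zero (p : List V) (u : V) (hu : p.getLast? = some u) (ho : own u = true)
      (hin : ∀ y : V, E u y → y ∈ p → cyc w p y ≤ c * clen p y)
      (hout : ∀ y : V, E u y → y ∉ p → Win1 (p ++ [y])) : Win1 p

variable {E own w c}

lemma determined [Fintype V] :
    ∀ (k : ℕ) (p : List V) (u : V), p.getLast? = some u → p.Nodup →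
      Fintype.card V ≤ p.length + k → ¬ Win1 E own w c p → Win0 E own w c p := by
  intro k
  induction k with
  | zero =>
    intro p u hu hnd hk hnw
    have hall : ∀ y : V, y ∈ p := by
      intro y
      have hle := hnd.length_le_card
      have hcard : p.toFinset.card = Fintype.card V := by
        rw [List.toFinset_card_of_nodup hnd]; omega
      have : p.toFinset = Finset.univ := Finset.eq_univ_of_card _ hcard
      rw [← List.mem_toFinset, this]; exact Finset.mem_univ y
    cases hown : own u with
    | true =>
      have hex : ∃ y, E u y ∧ ¬((y ∈ p → cyc w p y ≤ c * clen p y) ∧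
          (y ∉ p → Win1 E own w c (p ++ [y]))) := by
        by_contra hco
        push_neg at hco
        exact hnw (Win1.zero p u hu hown (fun y hEy => (hco y hEy).1) (fun y hEy => (hco y hEy).2))
      obtain ⟨y, hEy, hbad⟩ := hex
      have hB : y ∉ p → Win1 E own w c (p ++ [y]) := fun hy => absurd (hall y) hy
      have hA : ¬ (y ∈ p → cyc w p y ≤ c * clen p y) := fun hA => hbad ⟨hA, hB⟩
      push_neg at hA
      exact Win0.zero p u hu hown y hEy (fun _ => hA.2) (fun hy => absurd (hall y) hy)
    | false =>
      have key : ∀ y, E u y → ¬((y ∈ p → cyc w p y ≤ c * clen p y) ∧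
          (y ∉ p → Win1 E own w c (p ++ [y]))) :=
        fun y hEy hc => hnw (Win1.one p u hu hown y hEy hc.1 hc.2)
      refine Win0.one p u hu hown (fun y hEy hyp => ?_) (fun y hEy hyp => absurd (hall y) hyp)
      have hA : ¬ (y ∈ p → cyc w p y ≤ c * clen p y) :=
        fun hA => key y hEy ⟨hA, fun hy => absurd hyp hy⟩
      push_neg at hA
      exact hA.2
  | succ k ih =>
    intro p u hu hnd hk hnw
    have hrec : ∀ y : V, y ∉ p → ¬ Win1 E own w c (p ++ [y]) → Win0 E own w c (p ++ [y]) := by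
      intro y hy hnw'
      refine ih (p ++ [y]) y (by simp) ?_ ?_ hnw'
      · simpa [List.nodup_append] using ⟨hnd, fun (a : V) (ha : a ∈ p) (hay : a = y) => hy (hay ▸ ha)⟩
      · simp only [List.length_append, List.length_cons, List.length_nil]; omega
    cases hown : own u with
    | true =>
      have hex : ∃ y, E u y ∧ ¬((y ∈ p → cyc w p y ≤ c * clen p y) ∧
          (y ∉ p → Win1 E own w c (p ++ [y]))) := by
        by_contra hco
        push_neg at hco
        exact hnw (Win1.zero p u hu hown (fun y hEy => (hco y hEy).1) (fun y hEy => (hco y hEy).2))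
      obtain ⟨y, hEy, hbad⟩ := hex
      by_cases hyp : y ∈ p
      · have hA : ¬ (y ∈ p → cyc w p y ≤ c * clen p y) :=
          fun hA => hbad ⟨hA, fun hy => absurd hyp hy⟩
        push_neg at hA
        exact Win0.zero p u hu hown y hEy (fun _ => hA.2) (fun hy => absurd hyp hy)
      · have hB : ¬ (y ∉ p → Win1 E own w c (p ++ [y])) :=
          fun hB => hbad ⟨fun h => absurd h hyp, hB⟩
        push_neg at hB
        exact Win0.zero p u hu hown y hEy (fun h => absurd h hyp)
          (fun _ => hrec y hyp hB.2)
    | false =>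
      have key : ∀ y, E u y → ¬((y ∈ p → cyc w p y ≤ c * clen p y) ∧
          (y ∉ p → Win1 E own w c (p ++ [y]))) :=
        fun y hEy hc => hnw (Win1.one p u hu hown y hEy hc.1 hc.2)
      refine Win0.one p u hu hown (fun y hEy hyp => ?_) (fun y hEy hyp => ?_)
      · have hA : ¬ (y ∈ p → cyc w p y ≤ c * clen p y) :=
          fun hA => key y hEy ⟨hA, fun hy => absurd hyp hy⟩
        push_neg at hA
        exact hA.2
      · have hB : ¬ (y ∉ p → Win1 E own w c (p ++ [y])) :=
          fun hB => key y hEy ⟨fun h => absurd h hyp, hB⟩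
        push_neg at hB
        exact hrec y hyp hB.2

end Win


section Main
variable [DecidableEq V]

lemma outPrefix_ne_nil (H : Game V) (σ0 σ1 : Strat V) (v : V) (t : ℕ) :
    outPrefix H σ0 σ1 v t ≠ [] := by
  cases t <;> simp [outPrefix]

lemma outPrefix_getLast? (H : Game V) (σ0 σ1 : Strat V) (v : V) (t : ℕ) :
    (outPrefix H σ0 σ1 v t).getLast? = some (outcome H σ0 σ1 v t) := by
  obtain ⟨u, hu⟩ : ∃ u, (outPrefix H σ0 σ1 v t).getLast? = some u := by
    cases h : (outPrefix H σ0 σ1 v t).getLast? with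
    | none => exact absurd (List.getLast?_eq_none_iff.1 h) (outPrefix_ne_nil H σ0 σ1 v t)
    | some u => exact ⟨u, rfl⟩
  rw [hu, outcome, List.getLastD_eq_getLast?, hu]; rfl

lemma stk_getLast? : ∀ (h : List V), h ≠ [] → (stk h).getLast? = h.getLast? := by
  intro h
  induction h using List.reverseRecOn with
  | nil => intro h; exact absurd rfl h
  | append_singleton l a _ =>
    intro _
    rw [stk_concat, getLast?_step, List.getLast?_concat]

lemma stk_ne_nil (h : List V) (hne : h ≠ []) : stk h ≠ [] := by
  intro h0
  have := stk_getLast? h hne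
  rw [h0] at this
  exact hne (List.getLast?_eq_none_iff.1 this.symm)

lemma sum_eq_es (H : Game V) (σ0 σ1 : Strat V) (v : V) (w : V → V → ℝ) (k : ℕ) :
    (∑ i ∈ Finset.range k, w (outcome H σ0 σ1 v i) (outcome H σ0 σ1 v (i + 1)))
      = es w (outPrefix H σ0 σ1 v k) := by
  induction k with
  | zero => simp [outPrefix]
  | succ k ih =>
    rw [Finset.sum_range_succ, ih]
    have hstep : outPrefix H σ0 σ1 v (k + 1) = outPrefix H σ0 σ1 v k ++
        [if H.owner0 ((outPrefix H σ0 σ1 v k).getLastD v) then σ0 (outPrefix H σ0 σ1 v k)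
          else σ1 (outPrefix H σ0 σ1 v k)] := rfl
    have hlast := outPrefix_getLast? H σ0 σ1 v k
    have hout : outcome H σ0 σ1 v (k+1) = (if H.owner0 ((outPrefix H σ0 σ1 v k).getLastD v)
        then σ0 (outPrefix H σ0 σ1 v k) else σ1 (outPrefix H σ0 σ1 v k)) := by
      rw [outcome, hstep, List.getLastD_eq_getLast?, List.getLast?_concat]; rfl
    rw [hout, hstep, es_concat w _ _ _ hlast]


lemma pop_facts (w : V → V → ℝ) {p : List V} {u : V} (y : V) (hp : p.getLast? = some u)
    (hnd : p.Nodup) (hy : y ∈ p) :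
    (p.dropWhile fun z => !(z == y)) ≠ [] ∧ (p.dropWhile fun z => !(z == y)).Nodup ∧
    (p.dropWhile fun z => !(z == y)).getLast? = some u ∧
    step p y <+: p ∧ (step p y).Nodup ∧
    (step p y).length + (p.dropWhile fun z => !(z == y)).length = p.length + 1 ∧
    es w p = es w (step p y) + es w (p.dropWhile fun z => !(z == y)) ∧
    cyc w p y = es w (p.dropWhile fun z => !(z == y)) + w u y := by
  obtain ⟨r, hr⟩ := dropWhile_mem hy
  have hsplit : p.takeWhile (fun z => !(z == y)) ++ (y :: r) = p := by
    rw [← hr]; exact List.takeWhile_append_dropWhile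
  have hstep : step p y = p.takeWhile (fun z => !(z == y)) ++ [y] := by
    unfold step; rw [if_pos hy]
  have hdne : (p.dropWhile fun z => !(z == y)) ≠ [] := by rw [hr]; simp
  have hdnd : (p.dropWhile fun z => !(z == y)).Nodup :=
    (List.dropWhile_sublist _).nodup hnd
  have hdlast : (p.dropWhile fun z => !(z == y)).getLast? = some u := by
    rw [hr, ← List.getLast?_append_of_ne_nil (p.takeWhile (fun z => !(z == y)))
      (l₂ := y :: r) (by simp), hsplit, hp]
  have hpre : step p y <+: p := by
    rw [hstep]
    exact ⟨r, by rw [List.append_assoc, List.singleton_append, hsplit]⟩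
  have hsnd : (step p y).Nodup := hpre.sublist.nodup hnd
  have hl2 := congrArg List.length hsplit
  simp only [List.length_append, List.length_cons] at hl2
  have hlen : (step p y).length + (p.dropWhile fun z => !(z == y)).length = p.length + 1 := by
    rw [hstep, hr]
    simp only [List.length_append, List.length_cons, List.length_nil]
    omega
  have hes : es w p = es w (step p y) + es w (p.dropWhile fun z => !(z == y)) := by
    conv_lhs => rw [← hsplit]
    rw [es_split w, hstep, hr]
  have hcyc : cyc w p y = es w (p.dropWhile fun z => !(z == y)) + w u y :=
    es_concat w _ u y hdlast
  exact ⟨hdne, hdnd, hdlast, hpre, hsnd, hlen, hes, hcyc⟩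

noncomputable def pick (H : Game V) (u : V) : V := (H.succ u).choose

omit [DecidableEq V] in
lemma pick_spec (H : Game V) (u : V) : H.E u (pick H u) := (H.succ u).choose_spec

noncomputable def defStrat (H : Game V) (v0 : V) : Strat V :=
  fun h => pick H (h.getLastD v0)

omit [DecidableEq V] in
lemma defStrat_spec (H : Game V) (v0 : V) (h : List V) (u : V) (hu : h.getLast? = some u) :
    H.E u (defStrat H v0 h) := by
  have hgd : h.getLastD v0 = u := by rw [List.getLastD_eq_getLast?, hu]; rfl
  unfold defStrat
  rw [hgd]
  exact pick_spec H u

open Classical in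
noncomputable def sigma0 (H : Game V) (c : ℝ) (v0 : V) : Strat V :=
  fun h =>
    if hx : ∃ y, H.E (h.getLastD v0) y ∧
        (y ∈ stk h → c * clen (stk h) y < cyc H.w0 (stk h) y) ∧
        (y ∉ stk h → Win0 H.E H.owner0 H.w0 c (stk h ++ [y]))
    then hx.choose else pick H (h.getLastD v0)

open Classical in
noncomputable def sigma1 (H : Game V) (c : ℝ) (v0 : V) : Strat V :=
  fun h =>
    if hx : ∃ y, H.E (h.getLastD v0) y ∧
        (y ∈ stk h → cyc H.w0 (stk h) y ≤ c * clen (stk h) y) ∧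
        (y ∉ stk h → Win1 H.E H.owner0 H.w0 c (stk h ++ [y]))
    then hx.choose else pick H (h.getLastD v0)

lemma sigma0_valid (H : Game V) (c : ℝ) (v0 : V) : H.Valid0 (sigma0 H c v0) := by
  intro h u hu _
  have hgd : h.getLastD v0 = u := by rw [List.getLastD_eq_getLast?, hu]; rfl
  unfold sigma0
  split
  · next hx => rw [← hgd]; exact hx.choose_spec.1
  · rw [hgd]; exact pick_spec H u

lemma sigma1_valid (H : Game V) (c : ℝ) (v0 : V) : H.Valid1 (sigma1 H c v0) := by
  intro h u hu _
  have hgd : h.getLastD v0 = u := by rw [List.getLastD_eq_getLast?, hu]; rfl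
  unfold sigma1
  split
  · next hx => rw [← hgd]; exact hx.choose_spec.1
  · rw [hgd]; exact pick_spec H u

lemma inv0 (H : Game V) {c m : ℝ}
    (hmle : ∀ (d : List V) (y : V), d ≠ [] → d.Nodup →
      c * (d.length : ℝ) < es H.w0 (d ++ [y]) → m * (d.length : ℝ) ≤ es H.w0 (d ++ [y]))
    (v : V) (hwin : Win0 H.E H.owner0 H.w0 c [v])
    (σ1 : Strat V) (hσ1 : H.Valid1 σ1) (t : ℕ) :
    (stk (outPrefix H (sigma0 H c v) σ1 v t)).Nodup ∧
    (∀ q, q <+: stk (outPrefix H (sigma0 H c v) σ1 v t) → q ≠ [] → Win0 H.E H.owner0 H.w0 c q) ∧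
    es H.w0 (stk (outPrefix H (sigma0 H c v) σ1 v t))
      + m * ((t + 1 : ℝ) - ((stk (outPrefix H (sigma0 H c v) σ1 v t)).length : ℝ))
      ≤ es H.w0 (outPrefix H (sigma0 H c v) σ1 v t) := by
  induction t with
  | zero =>
    have h0 : stk (outPrefix H (sigma0 H c v) σ1 v 0) = [v] := by
      show stk [v] = [v]
      simp [stk, step]
    rw [h0]
    refine ⟨by simp, ?_, by
      rw [show outPrefix H (sigma0 H c v) σ1 v 0 = [v] from rfl]; simp⟩
    intro q hq hqne
    rcases prefix_singleton hq with h | h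
    · exact absurd h hqne
    · rw [h]; exact hwin
  | succ t ih =>
    obtain ⟨ihnd, ihwin, ihsum⟩ := ih
    set h := outPrefix H (sigma0 H c v) σ1 v t with hh
    set p := stk h with hp
    set u := outcome H (sigma0 H c v) σ1 v t with hu'
    have hne : h ≠ [] := outPrefix_ne_nil H _ σ1 v t
    have hlast : h.getLast? = some u := outPrefix_getLast? H _ σ1 v t
    have hplast : p.getLast? = some u := by rw [hp, stk_getLast? h hne, hlast]
    have hpne : p ≠ [] := stk_ne_nil h hne
    have hgd : h.getLastD v = u := by rw [List.getLastD_eq_getLast?, hlast]; rfl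
    have hwp : Win0 H.E H.owner0 H.w0 c p := ihwin p (List.prefix_refl p) hpne
    set nxt := (if H.owner0 (h.getLastD v) then sigma0 H c v h else σ1 h) with hnxt
    have hstep1 : outPrefix H (sigma0 H c v) σ1 v (t+1) = h ++ [nxt] := rfl
    have hgood : (nxt ∈ p → c * clen p nxt < cyc H.w0 p nxt) ∧
        (nxt ∉ p → Win0 H.E H.owner0 H.w0 c (p ++ [nxt])) := by
      cases ho : H.owner0 u with
      | true =>
        have hnxt0 : nxt = sigma0 H c v h := by rw [hnxt, hgd, ho, if_pos rfl]
        have hx : ∃ y, H.E (h.getLastD v) y ∧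
            (y ∈ stk h → c * clen (stk h) y < cyc H.w0 (stk h) y) ∧
            (y ∉ stk h → Win0 H.E H.owner0 H.w0 c (stk h ++ [y])) := by
          rw [hgd]
          cases hwp with
          | zero p' u' hu2 ho2 y hE hin hout =>
            have : u' = u := by rw [hplast] at hu2; exact (Option.some.inj hu2).symm
            subst this
            exact ⟨y, hE, hin, hout⟩
          | one p' u' hu2 ho2 hin hout =>
            have : u' = u := by rw [hplast] at hu2; exact (Option.some.inj hu2).symm
            subst this
            rw [ho] at ho2; cases ho2
        have hval : sigma0 H c v h = hx.choose := by
          unfold sigma0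
          rw [dif_pos hx]
        have := hx.choose_spec
        rw [← hval] at this
        rw [hnxt0]
        exact ⟨this.2.1, this.2.2⟩
      | false =>
        have hnxt1 : nxt = σ1 h := by rw [hnxt, hgd, ho]; simp
        have hE : H.E u nxt := by rw [hnxt1]; exact hσ1 h u hlast ho
        cases hwp with
        | zero p' u' hu2 ho2 y hE' hin hout =>
          have : u' = u := by rw [hplast] at hu2; exact (Option.some.inj hu2).symm
          subst this
          rw [ho] at ho2; cases ho2
        | one p' u' hu2 ho2 hin hout =>
          have : u' = u := by rw [hplast] at hu2; exact (Option.some.inj hu2).symm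
          subst this
          exact ⟨hin nxt hE, hout nxt hE⟩
    have hstk1 : stk (outPrefix H (sigma0 H c v) σ1 v (t+1)) = step p nxt := by
      rw [hstep1, stk_concat]
    have hesA : es H.w0 (h ++ [nxt]) = es H.w0 h + H.w0 u nxt := es_concat H.w0 h u nxt hlast
    by_cases hmem : nxt ∈ p
    · obtain ⟨hdne, hdnd, hdlast, hpre, hsnd, hlen, hes, hcycq⟩ :=
        pop_facts H.w0 nxt hplast ihnd hmem
      have hcyclt := hgood.1 hmem
      have hmlebd : m * ((p.dropWhile fun z => !(z == nxt)).length : ℝ) ≤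
          es H.w0 ((p.dropWhile fun z => !(z == nxt)) ++ [nxt]) := by
        apply hmle _ nxt hdne hdnd
        have : cyc H.w0 p nxt = es H.w0 ((p.dropWhile fun z => !(z == nxt)) ++ [nxt]) := rfl
        have hclen : clen p nxt = ((p.dropWhile fun z => !(z == nxt)).length : ℝ) := rfl
        rw [← this, ← hclen]
        exact hcyclt
      have hcyc2 : es H.w0 ((p.dropWhile fun z => !(z == nxt)) ++ [nxt])
          = es H.w0 (p.dropWhile fun z => !(z == nxt)) + H.w0 u nxt := hcycq
      rw [hstk1]
      refine ⟨hsnd, ?_, ?_⟩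
      · intro q hq hqne
        exact ihwin q (hq.trans hpre) hqne
      · rw [hstep1, hesA]
        have hlenc : ((step p nxt).length : ℝ) + ((p.dropWhile fun z => !(z == nxt)).length : ℝ)
            = (p.length : ℝ) + 1 := by exact_mod_cast congrArg Nat.cast hlen
        rw [hcyc2] at hmlebd
        have hplen : (1 : ℝ) ≤ ((p.dropWhile fun z => !(z == nxt)).length : ℝ) := by
          have : 1 ≤ (p.dropWhile fun z => !(z == nxt)).length := by
            cases hd : (p.dropWhile fun z => !(z == nxt)) with
            | nil => exact absurd hd hdne
            | cons a l => simp
          exact_mod_cast this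
        push_cast
        push_cast at ihsum hlenc
        rw [hes] at ihsum
        have hmul : m * ((t:ℝ) + 1 + 1 - ((step p nxt).length : ℝ))
            = m * ((t:ℝ) + 1 - (p.length : ℝ))
              + m * (((p.dropWhile fun z => !(z == nxt)).length : ℝ)) := by
          linear_combination (-m) * hlenc
        linarith
    · have hstep2 : step p nxt = p ++ [nxt] := by unfold step; rw [if_neg hmem]
      rw [hstk1, hstep2]
      refine ⟨?_, ?_, ?_⟩
      · simp only [List.nodup_append, List.nodup_cons, List.nodup_nil]
        exact ⟨ihnd, by simp, by simpa using fun (a : V) (ha : a ∈ p) (hay : a = nxt) => hmem (hay ▸ ha)⟩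
      · intro q hq hqne
        rcases prefix_concat hq with h' | h'
        · exact ihwin q h' hqne
        · rw [h']; exact hgood.2 hmem
      · rw [hstep1, hesA]
        have : es H.w0 (p ++ [nxt]) = es H.w0 p + H.w0 u nxt := es_concat H.w0 p u nxt hplast
        rw [this]
        simp only [List.length_append, List.length_cons, List.length_nil]
        push_cast
        push_cast at ihsum
        have hmul2 : m * ((t:ℝ) + 1 + 1 - ((p.length : ℝ) + 1))
            = m * ((t:ℝ) + 1 - (p.length : ℝ)) := by ring
        linarith


lemma inv1 (H : Game V) {c : ℝ}
    (v : V) (hwin : Win1 H.E H.owner0 H.w0 c [v])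
    (σ0 : Strat V) (hσ0 : H.Valid0 σ0) (t : ℕ) :
    (stk (outPrefix H σ0 (sigma1 H c v) v t)).Nodup ∧
    (∀ q, q <+: stk (outPrefix H σ0 (sigma1 H c v) v t) → q ≠ [] → Win1 H.E H.owner0 H.w0 c q) ∧
    es H.w0 (outPrefix H σ0 (sigma1 H c v) v t)
      ≤ es H.w0 (stk (outPrefix H σ0 (sigma1 H c v) v t))
        + c * ((t + 1 : ℝ) - ((stk (outPrefix H σ0 (sigma1 H c v) v t)).length : ℝ)) := by
  induction t with
  | zero =>
    have h0 : stk (outPrefix H σ0 (sigma1 H c v) v 0) = [v] := by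
      show stk [v] = [v]
      simp [stk, step]
    rw [h0]
    refine ⟨by simp, ?_, by
      rw [show outPrefix H σ0 (sigma1 H c v) v 0 = [v] from rfl]; simp⟩
    intro q hq hqne
    rcases prefix_singleton hq with h | h
    · exact absurd h hqne
    · rw [h]; exact hwin
  | succ t ih =>
    obtain ⟨ihnd, ihwin, ihsum⟩ := ih
    set h := outPrefix H σ0 (sigma1 H c v) v t with hh
    set p := stk h with hp
    set u := outcome H σ0 (sigma1 H c v) v t with hu'
    have hne : h ≠ [] := outPrefix_ne_nil H σ0 _ v t
    have hlast : h.getLast? = some u := outPrefix_getLast? H σ0 _ v t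
    have hplast : p.getLast? = some u := by rw [hp, stk_getLast? h hne, hlast]
    have hpne : p ≠ [] := stk_ne_nil h hne
    have hgd : h.getLastD v = u := by rw [List.getLastD_eq_getLast?, hlast]; rfl
    have hwp : Win1 H.E H.owner0 H.w0 c p := ihwin p (List.prefix_refl p) hpne
    set nxt := (if H.owner0 (h.getLastD v) then σ0 h else sigma1 H c v h) with hnxt
    have hstep1 : outPrefix H σ0 (sigma1 H c v) v (t+1) = h ++ [nxt] := rfl
    have hgood : (nxt ∈ p → cyc H.w0 p nxt ≤ c * clen p nxt) ∧
        (nxt ∉ p → Win1 H.E H.owner0 H.w0 c (p ++ [nxt])) := by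
      cases ho : H.owner0 u with
      | false =>
        have hnxt0 : nxt = sigma1 H c v h := by rw [hnxt, hgd, ho]; simp
        have hx : ∃ y, H.E (h.getLastD v) y ∧
            (y ∈ stk h → cyc H.w0 (stk h) y ≤ c * clen (stk h) y) ∧
            (y ∉ stk h → Win1 H.E H.owner0 H.w0 c (stk h ++ [y])) := by
          rw [hgd]
          cases hwp with
          | one p' u' hu2 ho2 y hE hin hout =>
            have : u' = u := by rw [hplast] at hu2; exact (Option.some.inj hu2).symm
            subst this
            exact ⟨y, hE, hin, hout⟩
          | zero p' u' hu2 ho2 hin hout =>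
            have : u' = u := by rw [hplast] at hu2; exact (Option.some.inj hu2).symm
            subst this
            rw [ho] at ho2; cases ho2
        have hval : sigma1 H c v h = hx.choose := by
          unfold sigma1
          rw [dif_pos hx]
        have := hx.choose_spec
        rw [← hval] at this
        rw [hnxt0]
        exact ⟨this.2.1, this.2.2⟩
      | true =>
        have hnxt1 : nxt = σ0 h := by rw [hnxt, hgd, ho, if_pos rfl]
        have hE : H.E u nxt := by rw [hnxt1]; exact hσ0 h u hlast ho
        cases hwp with
        | one p' u' hu2 ho2 y hE' hin hout =>
          have : u' = u := by rw [hplast] at hu2; exact (Option.some.inj hu2).symm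
          subst this
          rw [ho] at ho2; cases ho2
        | zero p' u' hu2 ho2 hin hout =>
          have : u' = u := by rw [hplast] at hu2; exact (Option.some.inj hu2).symm
          subst this
          exact ⟨hin nxt hE, hout nxt hE⟩
    have hstk1 : stk (outPrefix H σ0 (sigma1 H c v) v (t+1)) = step p nxt := by
      rw [hstep1, stk_concat]
    have hesA : es H.w0 (h ++ [nxt]) = es H.w0 h + H.w0 u nxt := es_concat H.w0 h u nxt hlast
    by_cases hmem : nxt ∈ p
    · obtain ⟨hdne, hdnd, hdlast, hpre, hsnd, hlen, hes, hcycq⟩ :=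
        pop_facts H.w0 nxt hplast ihnd hmem
      have hcyclt := hgood.1 hmem
      have hmlebd : es H.w0 (p.dropWhile fun z => !(z == nxt)) + H.w0 u nxt ≤
          c * ((p.dropWhile fun z => !(z == nxt)).length : ℝ) := by
        rw [← hcycq]
        exact hcyclt
      rw [hstk1]
      refine ⟨hsnd, ?_, ?_⟩
      · intro q hq hqne
        exact ihwin q (hq.trans hpre) hqne
      · rw [hstep1, hesA]
        have hlenc : ((step p nxt).length : ℝ) + ((p.dropWhile fun z => !(z == nxt)).length : ℝ)
            = (p.length : ℝ) + 1 := by exact_mod_cast congrArg Nat.cast hlen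
        push_cast
        push_cast at ihsum hlenc
        rw [hes] at ihsum
        have hmul : c * ((t:ℝ) + 1 + 1 - ((step p nxt).length : ℝ))
            = c * ((t:ℝ) + 1 - (p.length : ℝ))
              + c * (((p.dropWhile fun z => !(z == nxt)).length : ℝ)) := by
          linear_combination (-c) * hlenc
        linarith
    · have hstep2 : step p nxt = p ++ [nxt] := by unfold step; rw [if_neg hmem]
      rw [hstk1, hstep2]
      refine ⟨?_, ?_, ?_⟩
      · simp only [List.nodup_append, List.nodup_cons, List.nodup_nil]
        exact ⟨ihnd, by simp, by simpa using fun (a : V) (ha : a ∈ p) (hay : a = nxt) => hmem (hay ▸ ha)⟩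
      · intro q hq hqne
        rcases prefix_concat hq with h' | h'
        · exact ihwin q h' hqne
        · rw [h']; exact hgood.2 hmem
      · rw [hstep1, hesA]
        have : es H.w0 (p ++ [nxt]) = es H.w0 p + H.w0 u nxt := es_concat H.w0 p u nxt hplast
        rw [this]
        simp only [List.length_append, List.length_cons, List.length_nil]
        push_cast
        push_cast at ihsum
        have hmul2 : c * ((t:ℝ) + 1 + 1 - ((p.length : ℝ) + 1))
            = c * ((t:ℝ) + 1 - (p.length : ℝ)) := by ring
        linarith


omit [DecidableEq V] in
lemma outPrefix_length (H : Game V) (σ0 σ1 : Strat V) (v : V) :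
    ∀ t, (outPrefix H σ0 σ1 v t).length = t + 1 := by
  intro t
  induction t with
  | zero => rfl
  | succ t ih =>
    show (outPrefix H σ0 σ1 v t ++ [_]).length = t + 2
    rw [List.length_append, ih]
    rfl

omit [DecidableEq V] in
lemma es_bound' {w : V → V → ℝ} {W : ℝ} (hW0 : 0 ≤ W) (hW : ∀ u y, |w u y| ≤ W) :
    ∀ l : List V, |es w l| ≤ W * l.length := by
  intro l
  induction l with
  | nil => simp
  | cons x r ih =>
    cases r with
    | nil => simpa using hW0
    | cons b r' =>
      rw [show es w (x :: b :: r') = w x b + es w (b :: r') from rfl]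
      calc |w x b + es w (b :: r')| ≤ |w x b| + |es w (b :: r')| := abs_add_le _ _
        _ ≤ W + W * (b :: r').length := add_le_add (hW _ _) ih
        _ ≤ W * (x :: b :: r').length := by
            simp only [List.length_cons]; push_cast; nlinarith

lemma liminf_ge_of {f g : ℕ → ℝ} {a W2 : ℝ}
    (hfg : ∀ᶠ t in atTop, g t ≤ f t)
    (hg : Tendsto g atTop (nhds a))
    (hfW : ∀ᶠ t in atTop, f t ≤ W2) :
    a ≤ Filter.liminf f Filter.atTop := by
  rw [← hg.liminf_eq]
  exact Filter.liminf_le_liminf hfg hg.isBoundedUnder_ge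
    (Filter.isCoboundedUnder_ge_of_eventually_le _ hfW)

lemma liminf_le_of {f g : ℕ → ℝ} {a W2 : ℝ}
    (hfg : ∀ᶠ t in atTop, f t ≤ g t)
    (hg : Tendsto g atTop (nhds a))
    (hfW : ∀ᶠ t in atTop, -W2 ≤ f t) :
    Filter.liminf f Filter.atTop ≤ a := by
  rw [← hg.liminf_eq]
  refine Filter.liminf_le_liminf hfg ⟨-W2, by simpa using hfW⟩
    hg.isBoundedUnder_le.isCoboundedUnder_ge

lemma exists_m [Fintype V] (w : V → V → ℝ) (c : ℝ) :
    ∃ m : ℝ, c < m ∧ ∀ (d : List V) (y : V), d ≠ [] → d.Nodup →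
      c * (d.length : ℝ) < es w (d ++ [y]) → m * (d.length : ℝ) ≤ es w (d ++ [y]) := by
  classical
  set M : Set ℝ := {x | (∃ (d : List V) (y : V), d ≠ [] ∧ d.Nodup ∧
      x = es w (d ++ [y]) / (d.length : ℝ)) ∧ c < x} with hM
  have hsub : M ⊆ (fun q : List V × V => es w (q.1 ++ [q.2]) / (q.1.length : ℝ)) ''
      ({l : List V | l.length ≤ Fintype.card V} ×ˢ (Set.univ : Set V)) := by
    rintro x ⟨⟨d, y, hdne, hdnd, rfl⟩, hcx⟩
    exact ⟨(d, y), ⟨hdnd.length_le_card, trivial⟩, rfl⟩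
  have hMfin : M.Finite :=
    ((((List.finite_length_le V (Fintype.card V)).prod Set.finite_univ).image _).subset hsub)
  have hifin : (insert (c+1) M).Finite := hMfin.insert _
  have hine : (insert (c+1) M).Nonempty := ⟨c+1, Set.mem_insert _ _⟩
  have hmem := hine.csInf_mem hifin
  refine ⟨sInf (insert (c+1) M), ?_, ?_⟩
  · rcases Set.mem_insert_iff.1 hmem with h | h
    · rw [h]; linarith
    · exact h.2
  · intro d y hdne hdnd hlt
    have hl0 : (0:ℝ) < (d.length : ℝ) := by
      have : 0 < d.length := List.length_pos_iff.2 hdne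
      exact_mod_cast this
    have hx : es w (d ++ [y]) / (d.length : ℝ) ∈ M :=
      ⟨⟨d, y, hdne, hdnd, rfl⟩, (lt_div_iff₀ hl0).2 (by linarith)⟩
    have hle : sInf (insert (c+1) M) ≤ es w (d ++ [y]) / (d.length : ℝ) :=
      csInf_le hifin.bddBelow (Set.mem_insert_of_mem _ hx)
    calc sInf (insert (c+1) M) * (d.length:ℝ)
        ≤ (es w (d ++ [y]) / (d.length : ℝ)) * (d.length:ℝ) :=
          mul_le_mul_of_nonneg_right hle hl0.le
      _ = es w (d ++ [y]) := div_mul_cancel₀ _ (ne_of_gt hl0)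

lemma transfer1 [Fintype V] (H : Game V) (c : ℝ) (v : V)
    (hwin : Win0 H.E H.owner0 H.w0 c [v]) :
    ∃ m, c < m ∧ ∃ σ0, H.Valid0 σ0 ∧ ∀ σ1, H.Valid1 σ1 →
      m ≤ mp H.w0 (outcome H σ0 σ1 v) := by
  obtain ⟨m, hcm, hmle⟩ := exists_m H.w0 c
  obtain ⟨W0, hW0⟩ := (Set.finite_range (fun q : V × V => |H.w0 q.1 q.2|)).bddAbove
  set W := max W0 0 with hWdef
  have hWnn : (0:ℝ) ≤ W := le_max_right _ _
  have hW : ∀ u y, |H.w0 u y| ≤ W := fun u y =>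
    le_trans (hW0 (Set.mem_range_self (u, y))) (le_max_left _ _)
  refine ⟨m, hcm, sigma0 H c v, sigma0_valid H c v, ?_⟩
  intro σ1 hσ1
  set n := Fintype.card V with hn
  set K := W * n + |m| * ((n:ℝ)+1) with hK
  have key : ∀ k : ℕ, m * k - K ≤ es H.w0 (outPrefix H (sigma0 H c v) σ1 v k) := by
    intro k
    obtain ⟨hnd, hpw, hsum⟩ := inv0 H hmle v hwin σ1 hσ1 k
    set p := stk (outPrefix H (sigma0 H c v) σ1 v k) with hp
    have hpne : p ≠ [] := stk_ne_nil _ (outPrefix_ne_nil H _ σ1 v k)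
    have h1 : (p.length : ℝ) ≤ (n:ℝ) := by exact_mod_cast hnd.length_le_card
    have h2 : (1:ℝ) ≤ (p.length : ℝ) := by
      have : 0 < p.length := List.length_pos_iff.2 hpne
      exact_mod_cast this
    have h3 : |es H.w0 p| ≤ W * n := by
      calc |es H.w0 p| ≤ W * p.length := es_bound' hWnn hW p
        _ ≤ W * n := mul_le_mul_of_nonneg_left h1 hWnn
    have h4 : |m * (1 - (p.length:ℝ))| ≤ |m| * ((n:ℝ)+1) := by
      rw [abs_mul]
      refine mul_le_mul_of_nonneg_left ?_ (abs_nonneg m)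
      rw [abs_le]
      constructor <;> linarith
    have h5 : m * ((k:ℝ) + 1 - (p.length:ℝ)) = m * k + m * (1 - (p.length:ℝ)) := by ring
    have h6 := (abs_le.1 h3).1
    have h7 := (abs_le.1 h4).1
    linarith
  have hlim : ∀ᶠ k : ℕ in atTop,
      m - K / (k:ℝ) ≤ (∑ i ∈ Finset.range k,
        H.w0 (outcome H (sigma0 H c v) σ1 v i) (outcome H (sigma0 H c v) σ1 v (i+1))) / (k:ℝ) := by
    filter_upwards [Filter.eventually_ge_atTop 1] with k hk
    have hk0 : (0:ℝ) < (k:ℝ) := by exact_mod_cast hk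
    rw [sum_eq_es]
    have h := key k
    calc m - K / (k:ℝ) = (m * k - K) / (k:ℝ) := by field_simp
      _ ≤ es H.w0 (outPrefix H (sigma0 H c v) σ1 v k) / (k:ℝ) := (div_le_div_iff_of_pos_right hk0).2 h
  have hub : ∀ᶠ k : ℕ in atTop,
      (∑ i ∈ Finset.range k,
        H.w0 (outcome H (sigma0 H c v) σ1 v i) (outcome H (sigma0 H c v) σ1 v (i+1))) / (k:ℝ)
        ≤ 2 * W := by
    filter_upwards [Filter.eventually_ge_atTop 1] with k hk
    have hk0 : (0:ℝ) < (k:ℝ) := by exact_mod_cast hk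
    have hk1 : (1:ℝ) ≤ (k:ℝ) := by exact_mod_cast hk
    rw [sum_eq_es]
    rw [div_le_iff₀ hk0]
    have hb := es_bound' hWnn hW (outPrefix H (sigma0 H c v) σ1 v k)
    rw [outPrefix_length] at hb
    have hb1 := (abs_le.1 hb).2
    push_cast at hb1
    nlinarith
  have htend : Tendsto (fun k : ℕ => m - K / (k:ℝ)) atTop (nhds m) := by
    have := (tendsto_const_nhds (x := m) (f := atTop (α := ℕ))).sub
      (tendsto_const_div_atTop_nhds_zero_nat K)
    simpa using this
  exact liminf_ge_of hlim htend hub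


lemma transfer2 [Fintype V] (H : Game V) (c : ℝ) (v : V)
    (hwin : Win1 H.E H.owner0 H.w0 c [v]) :
    ∃ σ1, H.Valid1 σ1 ∧ ∀ σ0, H.Valid0 σ0 →
      mp H.w0 (outcome H σ0 σ1 v) ≤ c := by
  obtain ⟨W0, hW0⟩ := (Set.finite_range (fun q : V × V => |H.w0 q.1 q.2|)).bddAbove
  set W := max W0 0 with hWdef
  have hWnn : (0:ℝ) ≤ W := le_max_right _ _
  have hW : ∀ u y, |H.w0 u y| ≤ W := fun u y =>
    le_trans (hW0 (Set.mem_range_self (u, y))) (le_max_left _ _)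
  refine ⟨sigma1 H c v, sigma1_valid H c v, ?_⟩
  intro σ0 hσ0
  set n := Fintype.card V with hn
  set K := W * n + |c| * ((n:ℝ)+1) with hK
  have key : ∀ k : ℕ, es H.w0 (outPrefix H σ0 (sigma1 H c v) v k) ≤ c * k + K := by
    intro k
    obtain ⟨hnd, hpw, hsum⟩ := inv1 H v hwin σ0 hσ0 k
    set p := stk (outPrefix H σ0 (sigma1 H c v) v k) with hp
    have hpne : p ≠ [] := stk_ne_nil _ (outPrefix_ne_nil H σ0 _ v k)
    have h1 : (p.length : ℝ) ≤ (n:ℝ) := by exact_mod_cast hnd.length_le_card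
    have h2 : (1:ℝ) ≤ (p.length : ℝ) := by
      have : 0 < p.length := List.length_pos_iff.2 hpne
      exact_mod_cast this
    have h3 : |es H.w0 p| ≤ W * n := by
      calc |es H.w0 p| ≤ W * p.length := es_bound' hWnn hW p
        _ ≤ W * n := mul_le_mul_of_nonneg_left h1 hWnn
    have h4 : |c * (1 - (p.length:ℝ))| ≤ |c| * ((n:ℝ)+1) := by
      rw [abs_mul]
      refine mul_le_mul_of_nonneg_left ?_ (abs_nonneg c)
      rw [abs_le]
      constructor <;> linarith
    have h5 : c * ((k:ℝ) + 1 - (p.length:ℝ)) = c * k + c * (1 - (p.length:ℝ)) := by ring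
    have h6 := (abs_le.1 h3).2
    have h7 := (abs_le.1 h4).2
    linarith
  have hlim : ∀ᶠ k : ℕ in atTop,
      (∑ i ∈ Finset.range k,
        H.w0 (outcome H σ0 (sigma1 H c v) v i) (outcome H σ0 (sigma1 H c v) v (i+1))) / (k:ℝ)
        ≤ c + K / (k:ℝ) := by
    filter_upwards [Filter.eventually_ge_atTop 1] with k hk
    have hk0 : (0:ℝ) < (k:ℝ) := by exact_mod_cast hk
    rw [sum_eq_es]
    have h := key k
    calc es H.w0 (outPrefix H σ0 (sigma1 H c v) v k) / (k:ℝ)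
        ≤ (c * k + K) / (k:ℝ) := (div_le_div_iff_of_pos_right hk0).2 h
      _ = c + K / (k:ℝ) := by field_simp
  have hlb : ∀ᶠ k : ℕ in atTop,
      -(2 * W) ≤ (∑ i ∈ Finset.range k,
        H.w0 (outcome H σ0 (sigma1 H c v) v i) (outcome H σ0 (sigma1 H c v) v (i+1))) / (k:ℝ) := by
    filter_upwards [Filter.eventually_ge_atTop 1] with k hk
    have hk0 : (0:ℝ) < (k:ℝ) := by exact_mod_cast hk
    have hk1 : (1:ℝ) ≤ (k:ℝ) := by exact_mod_cast hk
    rw [sum_eq_es]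
    rw [le_div_iff₀ hk0]
    have hb := es_bound' hWnn hW (outPrefix H σ0 (sigma1 H c v) v k)
    rw [outPrefix_length] at hb
    have hb1 := (abs_le.1 hb).1
    push_cast at hb1
    nlinarith
  have htend : Tendsto (fun k : ℕ => c + K / (k:ℝ)) atTop (nhds c) := by
    have := (tendsto_const_nhds (x := c) (f := atTop (α := ℕ))).add
      (tendsto_const_div_atTop_nhds_zero_nat K)
    simpa using this
  exact liminf_le_of hlim htend hlb



lemma keyA [Fintype V] (H : Game V) (v : V) (c : ℝ)
    (hyp : ∃ σ0, H.Valid0 σ0 ∧ ∀ σ1, H.Valid1 σ1 → c < mp H.w0 (outcome H σ0 σ1 v)) :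
    ∃ m, c < m ∧ ∃ σ0, H.Valid0 σ0 ∧ ∀ σ1, H.Valid1 σ1 →
      m ≤ mp H.w0 (outcome H σ0 σ1 v) := by
  by_cases hw : Win1 H.E H.owner0 H.w0 c [v]
  · obtain ⟨σ1, hσ1, hle⟩ := transfer2 H c v hw
    obtain ⟨σ0, hσ0, hgt⟩ := hyp
    exact absurd (hle σ0 hσ0) (not_le.2 (hgt σ1 hσ1))
  · have hwin : Win0 H.E H.owner0 H.w0 c [v] :=
      determined (Fintype.card V) [v] v rfl (by simp) (by simp) hw
    exact transfer1 H c v hwin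

end Main

lemma outPrefix_congr (G G0 : Game V) (hown : G.owner0 = G0.owner0) (σ0 σ1 : Strat V) (v : V) :
    ∀ t, outPrefix G σ0 σ1 v t = outPrefix G0 σ0 σ1 v t := by
  intro t
  induction t with
  | zero => rfl
  | succ t ih =>
    show outPrefix G σ0 σ1 v t ++ _ = outPrefix G0 σ0 σ1 v t ++ _
    rw [ih, hown]

lemma outcome_congr (G G0 : Game V) (hown : G.owner0 = G0.owner0) (σ0 σ1 : Strat V) (v : V) :
    outcome G σ0 σ1 v = outcome G0 σ0 σ1 v := by
  funext t
  rw [outcome, outcome, outPrefix_congr G G0 hown]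

lemma mp_zero {w : V → V → ℝ} (hw1 : ∀ u y, w u y = 0) (π : ℕ → V) : mp w π = 0 := by
  unfold mp
  have : (fun k : ℕ => (∑ i ∈ Finset.range k, w (π i) (π (i + 1))) / (k : ℝ))
      = fun _ : ℕ => (0:ℝ) := by
    funext k; simp [hw1]
  rw [this, Filter.liminf_const]

lemma habs_sum {w : V → V → ℝ} {W : ℝ} (hW : ∀ u y, |w u y| ≤ W) (π : ℕ → V) :
    ∀ k : ℕ, |∑ i ∈ Finset.range k, w (π i) (π (i + 1))| ≤ W * k := by
  intro k
  induction k with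
  | zero => simp
  | succ k ih =>
    rw [Finset.sum_range_succ]
    calc |(∑ i ∈ Finset.range k, w (π i) (π (i + 1))) + w (π k) (π (k+1))|
        ≤ |∑ i ∈ Finset.range k, w (π i) (π (i + 1))| + |w (π k) (π (k+1))| := abs_add_le _ _
      _ ≤ W * k + W := add_le_add ih (hW _ _)
      _ = W * (k+1 : ℕ) := by push_cast; ring

lemma mp_bounds {w : V → V → ℝ} {W : ℝ} (hW0 : 0 ≤ W) (hW : ∀ u y, |w u y| ≤ W) (π : ℕ → V) :
    -W ≤ mp w π ∧ mp w π ≤ W := by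
  have hub : ∀ k : ℕ, (∑ i ∈ Finset.range k, w (π i) (π (i + 1))) / (k : ℝ) ≤ W := by
    intro k
    rcases Nat.eq_zero_or_pos k with rfl | hk
    · simpa using hW0
    · have hk0 : (0:ℝ) < (k:ℝ) := by exact_mod_cast hk
      rw [div_le_iff₀ hk0]
      exact le_trans (le_abs_self _) (habs_sum hW π k)
  have hlb : ∀ k : ℕ, -W ≤ (∑ i ∈ Finset.range k, w (π i) (π (i + 1))) / (k : ℝ) := by
    intro k
    rcases Nat.eq_zero_or_pos k with rfl | hk
    · simpa using hW0
    · have hk0 : (0:ℝ) < (k:ℝ) := by exact_mod_cast hk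
      rw [le_div_iff₀ hk0]
      have := (abs_le.1 (habs_sum hW π k)).1
      calc -W * (k:ℝ) = -(W * k) := by ring
        _ ≤ _ := this
  constructor
  · exact liminf_ge_of (Filter.Eventually.of_forall hlb) tendsto_const_nhds
      (Filter.Eventually.of_forall hub)
  · exact liminf_le_of (Filter.Eventually.of_forall hub) tendsto_const_nhds
      (Filter.Eventually.of_forall hlb)

end ZSAux

/-- reduction of zero-sum mean-payoff games to the ASV^ε threshold
problem: with `w₀ = w` and `w₁ ≡ 0`, Player 0 can guarantee mean-payoff > c in the
zero-sum game iff `ASV^ε(v) > c` in the bi-weighted game. -/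
theorem stmt17 {V : Type} [Fintype V] (G0 G : MPG.Game V)
    (hzs : ∀ u v, G0.w1 u v = - G0.w0 u v)
    (hE : G.E = G0.E) (hown : G.owner0 = G0.owner0)
    (hw0 : G.w0 = G0.w0) (hw1 : ∀ u v, G.w1 u v = 0)
    (v : V) (c : ℚ) (ε : ℝ) (hε : 0 < ε) :
    (∃ σ0 : MPG.Strat V, G0.Valid0 σ0 ∧ ∀ σ1 : MPG.Strat V, G0.Valid1 σ1 →
        MPG.mp G0.w0 (MPG.outcome G0 σ0 σ1 v) > (c : ℝ)) ↔
      MPG.ASVeV G ε v > (c : ℝ) := by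
  classical
  obtain ⟨W0, hW0⟩ := (Set.finite_range (fun q : V × V => |G.w0 q.1 q.2|)).bddAbove
  set W := max W0 0 with hWdef
  have hWnn : (0:ℝ) ≤ W := le_max_right _ _
  have hW : ∀ u y, |G.w0 u y| ≤ W := fun u y =>
    le_trans (hW0 (Set.mem_range_self (u, y))) (le_max_left _ _)
  have hval0 : G.Valid0 = G0.Valid0 := by
    funext σ; unfold MPG.Game.Valid0; rw [hE, hown]
  have hval1 : G.Valid1 = G0.Valid1 := by
    funext σ; unfold MPG.Game.Valid1; rw [hE, hown]
  have hout : ∀ σ σ' : MPG.Strat V, MPG.outcome G σ σ' v = MPG.outcome G0 σ σ' v :=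
    fun σ σ' => ZSAux.outcome_congr G G0 hown σ σ' v
  have hmp0 : ∀ σ σ' : MPG.Strat V,
      MPG.mp G.w0 (MPG.outcome G σ σ' v) = MPG.mp G0.w0 (MPG.outcome G0 σ σ' v) := by
    intro σ σ'; rw [hw0, hout]
  have hBRmem : ∀ (σ σ' : MPG.Strat V), G.Valid1 σ' → σ' ∈ MPG.BR G ε σ := by
    intro σ σ' hv
    refine ⟨hv, ?_⟩
    intro x σ1' _
    rw [ZSAux.mp_zero hw1, ZSAux.mp_zero hw1]
    linarith
  have hd : ∀ (h : List V) (u : V), h.getLast? = some u → G.E u (ZSAux.defStrat G v h) :=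
    fun h u hu => ZSAux.defStrat_spec G v h u hu
  have hd1 : G.Valid1 (ZSAux.defStrat G v) := fun h u hu _ => hd h u hu
  have hd0 : G.Valid0 (ZSAux.defStrat G v) := fun h u hu _ => hd h u hu
  have hbddBelowIm : ∀ σ : MPG.Strat V,
      BddBelow ((fun σ1 => MPG.mp G.w0 (MPG.outcome G σ σ1 v)) '' MPG.BR G ε σ) := by
    intro σ
    refine ⟨-W, ?_⟩
    rintro x ⟨σ1, _, rfl⟩
    show -W ≤ MPG.mp G.w0 (MPG.outcome G σ σ1 v)
    exact (ZSAux.mp_bounds hWnn hW _).1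
  have hImNe : ∀ σ : MPG.Strat V,
      ((fun σ1 => MPG.mp G.w0 (MPG.outcome G σ σ1 v)) '' MPG.BR G ε σ).Nonempty :=
    fun σ => ⟨_, ⟨ZSAux.defStrat G v, hBRmem σ _ hd1, rfl⟩⟩
  have hASVe : ∀ σ : MPG.Strat V, MPG.ASVe G ε σ v =
      sInf ((fun σ1 => MPG.mp G.w0 (MPG.outcome G σ σ1 v)) '' MPG.BR G ε σ) := fun _ => rfl
  have hup : ∀ σ : MPG.Strat V, MPG.ASVe G ε σ v ≤ W := by
    intro σ
    rw [hASVe]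
    exact le_trans (csInf_le (hbddBelowIm σ) ⟨ZSAux.defStrat G v, hBRmem σ _ hd1, rfl⟩)
      ((ZSAux.mp_bounds hWnn hW _).2)
  have hASVeV : MPG.ASVeV G ε v =
      sSup {x : ℝ | ∃ σ0 : MPG.Strat V, G.Valid0 σ0 ∧ x = MPG.ASVe G ε σ0 v} := rfl
  have hbddS : BddAbove {x : ℝ | ∃ σ0 : MPG.Strat V, G.Valid0 σ0 ∧ x = MPG.ASVe G ε σ0 v} := by
    refine ⟨W, ?_⟩
    rintro x ⟨σ, _, rfl⟩
    exact hup σ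
  constructor
  · rintro ⟨σ0, hσ0, hgt⟩
    obtain ⟨m, hcm, σ0', hσ0', hge⟩ := ZSAux.keyA G0 v (c:ℝ) ⟨σ0, hσ0, hgt⟩
    have hσ0G : G.Valid0 σ0' := by rw [hval0]; exact hσ0'
    have hlow : m ≤ MPG.ASVe G ε σ0' v := by
      rw [hASVe]
      apply le_csInf (hImNe σ0')
      rintro x ⟨σ1, hσ1BR, rfl⟩
      show m ≤ MPG.mp G.w0 (MPG.outcome G σ0' σ1 v)
      rw [hmp0]
      exact hge σ1 (by rw [← hval1]; exact hσ1BR.1)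
    rw [gt_iff_lt, hASVeV]
    calc (c:ℝ) < m := hcm
      _ ≤ MPG.ASVe G ε σ0' v := hlow
      _ ≤ _ := le_csSup hbddS ⟨σ0', hσ0G, rfl⟩
  · intro hA
    have hSne : {x : ℝ | ∃ σ0 : MPG.Strat V, G.Valid0 σ0 ∧ x = MPG.ASVe G ε σ0 v}.Nonempty :=
      ⟨_, ⟨ZSAux.defStrat G v, hd0, rfl⟩⟩
    have hex : ∃ x ∈ {x : ℝ | ∃ σ0 : MPG.Strat V, G.Valid0 σ0 ∧ x = MPG.ASVe G ε σ0 v},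
        (c:ℝ) < x := by
      by_contra hno
      push_neg at hno
      rw [gt_iff_lt, hASVeV] at hA
      exact absurd hA (not_lt.2 (csSup_le hSne hno))
    obtain ⟨x, ⟨σ0, hσ0, hxeq⟩, hcx⟩ := hex
    refine ⟨σ0, by rw [← hval0]; exact hσ0, ?_⟩
    intro σ1 hσ1
    have hσ1G : G.Valid1 σ1 := by rw [hval1]; exact hσ1
    have hmem : MPG.mp G.w0 (MPG.outcome G σ0 σ1 v) ∈
        ((fun σ1 => MPG.mp G.w0 (MPG.outcome G σ0 σ1 v)) '' MPG.BR G ε σ0) :=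
      ⟨σ1, hBRmem σ0 σ1 hσ1G, rfl⟩
    have hle := csInf_le (hbddBelowIm σ0) hmem
    rw [gt_iff_lt, ← hmp0 σ0 σ1]
    rw [hxeq, hASVe] at hcx
    linarith
end
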